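/- arXiv:2501.17135 — 4 statements merged into one kernel-verified Lean document; each statement's English description precedes it below -/
import Mathlib

section
/- Let Δ be a connected graph with a spanning tree set S ⊆ E_Δ, and let φ : Γ → Δ be a covering. Then there exists a proper lift Λ of Δ in Γ that contains an edge set mapped by φ bijectively onto S (a lift of S) whose endpoints are the interior vertices of Λ. -/
namespace VG

/-- A graph (directed multigraph): vertices, edges, initial and terminal endpoint maps. -/
structure MGraph : Type 1 where
  V : Type
  E : Type
  ι : E → V
  τ : E → V

/-- A homomorphism of graphs. -/
structure Hom (Γ Δ : MGraph) where
  onV : Γ.V → Δ.V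
  onE : Γ.E → Δ.E
  map_ι : ∀ e, Δ.ι (onE e) = onV (Γ.ι e)
  map_τ : ∀ e, Δ.τ (onE e) = onV (Γ.τ e)

/-- Composition of homomorphisms. -/
def Hom.comp {Γ₁ Γ₂ Γ₃ : MGraph} (g : Hom Γ₂ Γ₃) (f : Hom Γ₁ Γ₂) : Hom Γ₁ Γ₃ where
  onV := g.onV ∘ f.onV
  onE := g.onE ∘ f.onE
  map_ι e := by simp only [Function.comp_apply]; rw [g.map_ι, f.map_ι]
  map_τ e := by simp only [Function.comp_apply]; rw [g.map_τ, f.map_τ]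

/-- An isomorphism of graphs: a homomorphism bijective on vertices and on edges. -/
structure Iso (Γ Δ : MGraph) where
  onV : Γ.V ≃ Δ.V
  onE : Γ.E ≃ Δ.E
  map_ι : ∀ e, Δ.ι (onE e) = onV (Γ.ι e)
  map_τ : ∀ e, Δ.τ (onE e) = onV (Γ.τ e)

def Iso.toHom {Γ Δ : MGraph} (f : Iso Γ Δ) : Hom Γ Δ :=
  ⟨f.onV, f.onE, f.map_ι, f.map_τ⟩

/-- The automorphisms of a graph. -/
abbrev Aut (Γ : MGraph) := Iso Γ Γ

theorem Iso.ext' {Γ Δ : MGraph} {f g : Iso Γ Δ} (hV : f.onV = g.onV) (hE : f.onE = g.onE) :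
    f = g := by
  cases f; cases g; cases hV; cases hE; rfl

instance (Γ : MGraph) : Group (Aut Γ) where
  one := ⟨Equiv.refl _, Equiv.refl _, fun _ => rfl, fun _ => rfl⟩
  mul g h := ⟨h.onV.trans g.onV, h.onE.trans g.onE,
    fun e => by simp only [Equiv.trans_apply]; rw [g.map_ι, h.map_ι],
    fun e => by simp only [Equiv.trans_apply]; rw [g.map_τ, h.map_τ]⟩
  inv g := ⟨g.onV.symm, g.onE.symm,
    fun e => by
      have h := g.map_ι (g.onE.symm e)
      rw [Equiv.apply_symm_apply] at h
      rw [h, Equiv.symm_apply_apply],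
    fun e => by
      have h := g.map_τ (g.onE.symm e)
      rw [Equiv.apply_symm_apply] at h
      rw [h, Equiv.symm_apply_apply]⟩
  mul_assoc a b c := Iso.ext' (Equiv.ext fun _ => rfl) (Equiv.ext fun _ => rfl)
  one_mul a := Iso.ext' (Equiv.ext fun _ => rfl) (Equiv.ext fun _ => rfl)
  mul_one a := Iso.ext' (Equiv.ext fun _ => rfl) (Equiv.ext fun _ => rfl)
  inv_mul_cancel a :=
    Iso.ext' (Equiv.ext fun x => a.onV.symm_apply_apply x)
      (Equiv.ext fun x => a.onE.symm_apply_apply x)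

theorem Aut.mul_onV {Γ : MGraph} (g h : Aut Γ) (v : Γ.V) : (g * h).onV v = g.onV (h.onV v) := rfl
theorem Aut.mul_onE {Γ : MGraph} (g h : Aut Γ) (e : Γ.E) : (g * h).onE e = g.onE (h.onE e) := rfl
theorem Aut.one_onV {Γ : MGraph} (v : Γ.V) : (1 : Aut Γ).onV v = v := rfl
theorem Aut.inv_onV {Γ : MGraph} (g : Aut Γ) (v : Γ.V) : g⁻¹.onV v = g.onV.symm v := rfl

/-- The outset of a vertex. -/
def Out (Γ : MGraph) (v : Γ.V) : Set Γ.E := {e | Γ.ι e = v}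

/-- The inset of a vertex. -/
def In (Γ : MGraph) (v : Γ.V) : Set Γ.E := {e | Γ.τ e = v}

/-- A covering: a surjective homomorphism restricting to bijections on out-sets and in-sets. -/
structure IsCovering {Γ Δ : MGraph} (φ : Hom Γ Δ) : Prop where
  surjV : Function.Surjective φ.onV
  surjE : Function.Surjective φ.onE
  bijOut : ∀ v : Γ.V, Set.BijOn φ.onE (Out Γ v) (Out Δ (φ.onV v))
  bijIn : ∀ v : Γ.V, Set.BijOn φ.onE (In Γ v) (In Δ (φ.onV v))

/-- The cover group of a covering: automorphisms `g` of `Γ` with `φ ∘ g = φ`. -/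
def coverGroup {Γ Δ : MGraph} (φ : Hom Γ Δ) : Subgroup (Aut Γ) where
  carrier := {g | (∀ v, φ.onV (g.onV v) = φ.onV v) ∧ (∀ e, φ.onE (g.onE e) = φ.onE e)}
  one_mem' := ⟨fun _ => rfl, fun _ => rfl⟩
  mul_mem' := by
    rintro g h ⟨hgV, hgE⟩ ⟨hhV, hhE⟩
    exact ⟨fun v => by rw [Aut.mul_onV, hgV, hhV], fun e => by rw [Aut.mul_onE, hgE, hhE]⟩
  inv_mem' := by
    rintro g ⟨hgV, hgE⟩
    refine ⟨fun v => ?_, fun e => ?_⟩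
    · have h := hgV (g.onV.symm v)
      rw [Equiv.apply_symm_apply] at h
      exact h.symm
    · have h := hgE (g.onE.symm e)
      rw [Equiv.apply_symm_apply] at h
      exact h.symm

theorem mem_coverGroup {Γ Δ : MGraph} {φ : Hom Γ Δ} {g : Aut Γ} :
    g ∈ coverGroup φ ↔ (∀ v, φ.onV (g.onV v) = φ.onV v) ∧ (∀ e, φ.onE (g.onE e) = φ.onE e) :=
  Iff.rfl

/-- A covering is regular if its cover group acts transitively on all fibers
(of vertices and of edges). -/
def IsRegular {Γ Δ : MGraph} (φ : Hom Γ Δ) : Prop :=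
  (∀ v w : Γ.V, φ.onV v = φ.onV w → ∃ g ∈ coverGroup φ, g.onV v = w) ∧
  (∀ e f : Γ.E, φ.onE e = φ.onE f → ∃ g ∈ coverGroup φ, g.onE e = f)

/-- The orbit equivalence on vertices induced by a subgroup of automorphisms. -/
def vSetoid (Γ : MGraph) (G : Subgroup (Aut Γ)) : Setoid Γ.V where
  r v w := ∃ g ∈ G, g.onV v = w
  iseqv := by
    refine ⟨fun v => ⟨1, one_mem _, rfl⟩, ?_, ?_⟩
    · rintro v w ⟨g, hg, rfl⟩
      exact ⟨g⁻¹, inv_mem hg, g.onV.symm_apply_apply v⟩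
    · rintro u v w ⟨g, hg, rfl⟩ ⟨h, hh, rfl⟩
      exact ⟨h * g, mul_mem hh hg, rfl⟩

/-- The orbit equivalence on edges induced by a subgroup of automorphisms. -/
def eSetoid (Γ : MGraph) (G : Subgroup (Aut Γ)) : Setoid Γ.E where
  r e f := ∃ g ∈ G, g.onE e = f
  iseqv := by
    refine ⟨fun e => ⟨1, one_mem _, rfl⟩, ?_, ?_⟩
    · rintro e f ⟨g, hg, rfl⟩
      exact ⟨g⁻¹, inv_mem hg, g.onE.symm_apply_apply e⟩
    · rintro e f d ⟨g, hg, rfl⟩ ⟨h, hh, rfl⟩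
      exact ⟨h * g, mul_mem hh hg, rfl⟩

/-- The quotient graph of `Γ` by a subgroup `G` of automorphisms. -/
def quotientGraph (Γ : MGraph) (G : Subgroup (Aut Γ)) : MGraph where
  V := Quotient (vSetoid Γ G)
  E := Quotient (eSetoid Γ G)
  ι := Quotient.map' Γ.ι (by rintro e f ⟨g, hg, rfl⟩; exact ⟨g, hg, (g.map_ι e).symm⟩)
  τ := Quotient.map' Γ.τ (by rintro e f ⟨g, hg, rfl⟩; exact ⟨g, hg, (g.map_τ e).symm⟩)

/-- The canonical projection of a graph onto its quotient by a subgroup of automorphisms. -/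
def quotientProj (Γ : MGraph) (G : Subgroup (Aut Γ)) : Hom Γ (quotientGraph Γ G) where
  onV := Quotient.mk (vSetoid Γ G)
  onE := Quotient.mk (eSetoid Γ G)
  map_ι e := rfl
  map_τ e := rfl

/-- A subgroup of automorphisms acts freely: nonidentity elements move every vertex. -/
def ActsFreely (Γ : MGraph) (G : Subgroup (Aut Γ)) : Prop :=
  ∀ g ∈ G, g ≠ 1 → ∀ v : Γ.V, g.onV v ≠ v

/-! ### Walks -/

/-- The vertex from which a step (edge together with a direction of traversal) departs. -/
def stepSrc (Γ : MGraph) (s : Γ.E × Bool) : Γ.V := cond s.2 (Γ.ι s.1) (Γ.τ s.1)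

/-- The vertex at which a step arrives. -/
def stepTgt (Γ : MGraph) (s : Γ.E × Bool) : Γ.V := cond s.2 (Γ.τ s.1) (Γ.ι s.1)

/-- A list of steps forms a chain starting at a given vertex. -/
def chain (Γ : MGraph) : Γ.V → List (Γ.E × Bool) → Prop
  | _, [] => True
  | v, s :: rest => stepSrc Γ s = v ∧ chain Γ (stepTgt Γ s) rest

/-- The final vertex after traversing a list of steps from a given vertex. -/
def endOf (Γ : MGraph) : Γ.V → List (Γ.E × Bool) → Γ.V
  | v, [] => v
  | _, s :: rest => endOf Γ (stepTgt Γ s) rest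

/-- A walk: an initial vertex and a compatible list of steps, each traversing an
edge either along (`true`) or against (`false`) its orientation. -/
structure Walk (Γ : MGraph) where
  first : Γ.V
  steps : List (Γ.E × Bool)
  ok : chain Γ first steps

/-- The terminal vertex of a walk. -/
def Walk.last {Γ : MGraph} (w : Walk Γ) : Γ.V := endOf Γ w.first w.steps

/-- Two vertices joined by a walk. -/
def Reachable (Γ : MGraph) (u v : Γ.V) : Prop :=
  ∃ w : Walk Γ, w.first = u ∧ w.last = v

/-- A graph is connected if any two vertices are joined by a walk. -/
def Connected (Γ : MGraph) : Prop :=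
  ∀ u v : Γ.V, Reachable Γ u v

def Hom.mapStep {Γ Δ : MGraph} (φ : Hom Γ Δ) (s : Γ.E × Bool) : Δ.E × Bool := (φ.onE s.1, s.2)

theorem Hom.stepSrc_map {Γ Δ : MGraph} (φ : Hom Γ Δ) (s : Γ.E × Bool) :
    stepSrc Δ (φ.mapStep s) = φ.onV (stepSrc Γ s) := by
  obtain ⟨e, b⟩ := s
  cases b <;> simp [stepSrc, Hom.mapStep, φ.map_ι, φ.map_τ]

theorem Hom.stepTgt_map {Γ Δ : MGraph} (φ : Hom Γ Δ) (s : Γ.E × Bool) :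
    stepTgt Δ (φ.mapStep s) = φ.onV (stepTgt Γ s) := by
  obtain ⟨e, b⟩ := s
  cases b <;> simp [stepTgt, Hom.mapStep, φ.map_ι, φ.map_τ]

theorem Hom.chain_map {Γ Δ : MGraph} (φ : Hom Γ Δ) (l : List (Γ.E × Bool)) (v : Γ.V)
    (h : chain Γ v l) : chain Δ (φ.onV v) (l.map φ.mapStep) := by
  induction l generalizing v with
  | nil => trivial
  | cons s rest ih =>
    exact ⟨by rw [φ.stepSrc_map, h.1], by rw [φ.stepTgt_map]; exact ih _ h.2⟩

/-- The image of a walk under a homomorphism (edge-by-edge, preserving directions). -/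
def Walk.map {Γ Δ : MGraph} (φ : Hom Γ Δ) (w : Walk Γ) : Walk Δ :=
  ⟨φ.onV w.first, w.steps.map φ.mapStep, φ.chain_map w.steps w.first w.ok⟩

theorem endOf_map {Γ Δ : MGraph} (φ : Hom Γ Δ) (l : List (Γ.E × Bool)) (v : Γ.V) :
    endOf Δ (φ.onV v) (l.map φ.mapStep) = φ.onV (endOf Γ v l) := by
  induction l generalizing v with
  | nil => rfl
  | cons s rest ih =>
    show endOf Δ (stepTgt Δ (φ.mapStep s)) (rest.map φ.mapStep) = _
    rw [φ.stepTgt_map]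
    exact ih _

theorem chain_append (Γ : MGraph) (l₁ l₂ : List (Γ.E × Bool)) (v : Γ.V)
    (h₁ : chain Γ v l₁) (h₂ : chain Γ (endOf Γ v l₁) l₂) : chain Γ v (l₁ ++ l₂) := by
  induction l₁ generalizing v with
  | nil => exact h₂
  | cons s rest ih => exact ⟨h₁.1, ih _ h₁.2 h₂⟩

theorem endOf_append (Γ : MGraph) (l₁ l₂ : List (Γ.E × Bool)) (v : Γ.V) :
    endOf Γ v (l₁ ++ l₂) = endOf Γ (endOf Γ v l₁) l₂ := by
  induction l₁ generalizing v with
  | nil => rfl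
  | cons s rest ih => exact ih _

/-- Concatenation of walks. -/
def Walk.append {Γ : MGraph} (w₁ w₂ : Walk Γ) (h : w₁.last = w₂.first) : Walk Γ :=
  ⟨w₁.first, w₁.steps ++ w₂.steps, chain_append Γ _ _ _ w₁.ok (by rw [show endOf Γ w₁.first w₁.steps = w₂.first from h]; exact w₂.ok)⟩

theorem Walk.append_last {Γ : MGraph} (w₁ w₂ : Walk Γ) (h : w₁.last = w₂.first) :
    (w₁.append w₂ h).last = w₂.last := by
  show endOf Γ w₁.first (w₁.steps ++ w₂.steps) = _
  rw [endOf_append, show endOf Γ w₁.first w₁.steps = w₂.first from h]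
  rfl

theorem Reachable.trans {Γ : MGraph} {u v w : Γ.V}
    (h₁ : Reachable Γ u v) (h₂ : Reachable Γ v w) : Reachable Γ u w := by
  obtain ⟨p, hp1, hp2⟩ := h₁
  obtain ⟨q, hq1, hq2⟩ := h₂
  exact ⟨p.append q (by rw [hp2, hq1]), hp1, by rw [Walk.append_last]; exact hq2⟩

/-- A single forward step along an edge, as a walk. -/
def Walk.single {Γ : MGraph} (e : Γ.E) : Walk Γ :=
  ⟨Γ.ι e, [(e, true)], ⟨rfl, trivial⟩⟩

def flipStep {Γ : MGraph} (s : Γ.E × Bool) : Γ.E × Bool := (s.1, !s.2)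

theorem stepSrc_flip (Γ : MGraph) (s : Γ.E × Bool) : stepSrc Γ (flipStep s) = stepTgt Γ s := by
  obtain ⟨e, b⟩ := s; cases b <;> rfl

theorem stepTgt_flip (Γ : MGraph) (s : Γ.E × Bool) : stepTgt Γ (flipStep s) = stepSrc Γ s := by
  obtain ⟨e, b⟩ := s; cases b <;> rfl

theorem endOf_reverse (Γ : MGraph) (l : List (Γ.E × Bool)) (v : Γ.V) (h : chain Γ v l) :
    endOf Γ (endOf Γ v l) (l.reverse.map flipStep) = v := by
  induction l generalizing v with
  | nil => rfl
  | cons s rest ih =>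
    rw [List.reverse_cons, List.map_append]
    show endOf Γ (endOf Γ (stepTgt Γ s) rest) ((rest.reverse.map flipStep) ++ [flipStep s]) = v
    rw [endOf_append, ih _ h.2]
    show stepTgt Γ (flipStep s) = v
    rw [stepTgt_flip]; exact h.1

theorem chain_reverse (Γ : MGraph) (l : List (Γ.E × Bool)) (v : Γ.V) (h : chain Γ v l) :
    chain Γ (endOf Γ v l) (l.reverse.map flipStep) := by
  induction l generalizing v with
  | nil => trivial
  | cons s rest ih =>
    rw [List.reverse_cons, List.map_append]
    show chain Γ (endOf Γ (stepTgt Γ s) rest) _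
    refine chain_append Γ _ _ _ (ih _ h.2) ?_
    rw [endOf_reverse Γ rest _ h.2]
    exact ⟨by rw [stepSrc_flip], trivial⟩

/-- The reversal of a walk. -/
def Walk.reverse {Γ : MGraph} (w : Walk Γ) : Walk Γ :=
  ⟨w.last, w.steps.reverse.map flipStep, chain_reverse Γ w.steps w.first w.ok⟩

theorem Walk.reverse_last {Γ : MGraph} (w : Walk Γ) : w.reverse.last = w.first :=
  endOf_reverse Γ w.steps w.first w.ok

theorem Reachable.refl' (Γ : MGraph) (v : Γ.V) : Reachable Γ v v :=
  ⟨⟨v, [], trivial⟩, rfl, rfl⟩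

theorem Reachable.symm' {Γ : MGraph} {u v : Γ.V} (h : Reachable Γ u v) : Reachable Γ v u := by
  obtain ⟨p, h1, h2⟩ := h
  exact ⟨p.reverse, by rw [show p.reverse.first = p.last from rfl, h2],
    by rw [p.reverse_last, h1]⟩

/-- The connected-component equivalence on vertices. -/
def reachSetoid (Γ : MGraph) : Setoid Γ.V where
  r := Reachable Γ
  iseqv := ⟨Reachable.refl' Γ, Reachable.symm', Reachable.trans⟩

/-! ### Subgraphs, trees, lifts -/

/-- A subgraph of a graph. -/
structure Subgraph (Γ : MGraph) where
  verts : Set Γ.V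
  edges : Set Γ.E
  ι_mem : ∀ e ∈ edges, Γ.ι e ∈ verts
  τ_mem : ∀ e ∈ edges, Γ.τ e ∈ verts

/-- The graph determined by a subgraph. -/
def Subgraph.toMGraph {Γ : MGraph} (H : Subgraph Γ) : MGraph where
  V := ↥H.verts
  E := ↥H.edges
  ι e := ⟨Γ.ι e.1, H.ι_mem e.1 e.2⟩
  τ e := ⟨Γ.τ e.1, H.τ_mem e.1 e.2⟩

/-- The inclusion homomorphism of a subgraph. -/
def Subgraph.incl {Γ : MGraph} (H : Subgraph Γ) : Hom H.toMGraph Γ :=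
  ⟨fun v => v.1, fun e => e.1, fun _ => rfl, fun _ => rfl⟩

/-- The set of endpoints of a set of edges. -/
def endpoints (Γ : MGraph) (S : Set Γ.E) : Set Γ.V := {v | ∃ e ∈ S, Γ.ι e = v ∨ Γ.τ e = v}

/-- The subgraph induced by a set of edges. -/
def edgeInduced (Γ : MGraph) (S : Set Γ.E) : Subgraph Γ where
  verts := endpoints Γ S
  edges := S
  ι_mem e he := ⟨e, he, Or.inl rfl⟩
  τ_mem e he := ⟨e, he, Or.inr rfl⟩

/-- The list of vertices visited when traversing a list of steps from a vertex. -/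
def vertsOf (Γ : MGraph) : Γ.V → List (Γ.E × Bool) → List Γ.V
  | v, [] => [v]
  | v, s :: rest => v :: vertsOf Γ (stepTgt Γ s) rest

/-- A path: a walk with no repeated edge and no repeated vertex
(except possibly the initial and terminal vertex coinciding). -/
def Walk.IsPath {Γ : MGraph} (w : Walk Γ) : Prop :=
  (w.steps.map Prod.fst).Nodup ∧
  (vertsOf Γ w.first w.steps).dropLast.Nodup ∧
  (vertsOf Γ w.first w.steps).tail.Nodup

/-- A cyclic walk: terminal vertex equals initial vertex. -/
def Walk.IsCyclic {Γ : MGraph} (w : Walk Γ) : Prop := w.last = w.first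

/-- A graph is acyclic if it has no nontrivial cyclic path. -/
def Acyclic (Γ : MGraph) : Prop :=
  ¬ ∃ w : Walk Γ, w.steps ≠ [] ∧ w.IsCyclic ∧ w.IsPath

/-- A spanning tree set: an edge set inducing an acyclic connected subgraph
containing all vertices. -/
def IsSpanningTreeSet (Δ : MGraph) (S : Set Δ.E) : Prop :=
  Acyclic (edgeInduced Δ S).toMGraph ∧ Connected (edgeInduced Δ S).toMGraph ∧
  ∀ v : Δ.V, v ∈ endpoints Δ S

/-- A lift of `Δ` with respect to a covering `φ : Γ → Δ`: a connected subgraph of `Γ`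
on whose edges `φ` restricts to a bijection onto the edges of `Δ`. -/
def IsLift {Γ Δ : MGraph} (φ : Hom Γ Δ) (Λ : Subgraph Γ) : Prop :=
  Connected Λ.toMGraph ∧ Set.BijOn φ.onE Λ.edges Set.univ

/-- A proper lift, with designated edge set `S₀` lifting a spanning tree set of `Δ`:
every edge of the lift has its initial endpoint among the endpoints of `S₀`
(the interior vertices). -/
def IsProperLiftWith {Γ Δ : MGraph} (φ : Hom Γ Δ) (Λ : Subgraph Γ) (S₀ : Set Γ.E) : Prop :=
  IsLift φ Λ ∧ S₀ ⊆ Λ.edges ∧ IsSpanningTreeSet Δ (φ.onE '' S₀) ∧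
  ∀ e ∈ Λ.edges, Γ.ι e ∈ endpoints Γ S₀

/-- A proper lift. -/
def IsProperLift {Γ Δ : MGraph} (φ : Hom Γ Δ) (Λ : Subgraph Γ) : Prop :=
  ∃ S₀ : Set Γ.E, IsProperLiftWith φ Λ S₀

/-! ### Voltage graphs -/

/-- The voltage of a walk: the ordered product of the voltages of its edges,
inverted when an edge is traversed against its orientation. -/
def voltage {Δ : MGraph} {G : Type} [Group G] (γ : Δ.E → G) (w : Walk Δ) : G :=
  (w.steps.map fun s => cond s.2 (γ s.1) (γ s.1)⁻¹).prod

/-- The derived graph of a voltage graph `(Δ, γ)`. -/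
def derivedGraph (Δ : MGraph) {G : Type} [Group G] (γ : Δ.E → G) : MGraph where
  V := Δ.V × G
  E := Δ.E × G
  ι e := (Δ.ι e.1, e.2)
  τ e := (Δ.τ e.1, e.2 * γ e.1)

/-- The canonical covering of a derived graph onto its base. -/
def derivedProj (Δ : MGraph) {G : Type} [Group G] (γ : Δ.E → G) : Hom (derivedGraph Δ γ) Δ :=
  ⟨Prod.fst, Prod.fst, fun _ => rfl, fun _ => rfl⟩

/-- Restriction of a voltage assignment to the subgroup generated by its values. -/
def restrictToClosure {G : Type} [Group G] {α : Type} (γ : α → G) :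
    α → Subgroup.closure (Set.range γ) :=
  fun a => ⟨γ a, Subgroup.subset_closure (Set.mem_range_self a)⟩

/-- The connected component of a vertex, as a subgraph. -/
def componentOf (Γ : MGraph) (v : Γ.V) : Subgraph Γ where
  verts := {u | Reachable Γ v u}
  edges := {e | Reachable Γ v (Γ.ι e)}
  ι_mem e he := he
  τ_mem e he := Reachable.trans he ⟨Walk.single e, rfl, rfl⟩

/-- `γ'` is the condensation of `γ` with respect to the spanning tree set `S` and the base
vertex `v₀`: edges of `S` get the identity, and an edge `e ∉ S` gets the voltage of the
return walk of `e` from `v₀` via `S`. -/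
def IsCondensation {Δ : MGraph} {G : Type} [Group G] (γ : Δ.E → G) (S : Set Δ.E)
    (v₀ : Δ.V) (γ' : Δ.E → G) : Prop :=
  (∀ e ∈ S, γ' e = 1) ∧
  ∀ e ∉ S, ∃ p₁ p₂ : Walk Δ,
    p₁.first = v₀ ∧ p₁.last = Δ.ι e ∧ p₂.first = Δ.τ e ∧ p₂.last = v₀ ∧
    p₁.IsPath ∧ p₂.IsPath ∧
    (∀ s ∈ p₁.steps, s.1 ∈ S) ∧ (∀ s ∈ p₂.steps, s.1 ∈ S) ∧
    γ' e = voltage γ p₁ * γ e * voltage γ p₂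

/-- `γ` is the voltage assignment on `Δ` with respect to the proper lift `Λ` (with interior
determined by `S₀`): interior edges of the lift give voltage `1`, and a boundary edge with
terminal endpoint in `g · V_Λ⁰` gives voltage `g`. -/
def IsVoltageWrt {Γ Δ : MGraph} (φ : Hom Γ Δ) (Λ : Subgraph Γ) (S₀ : Set Γ.E)
    (γ : Δ.E → Aut Γ) : Prop :=
  (∀ eΔ : Δ.E, γ eΔ ∈ coverGroup φ) ∧
  ∀ e ∈ Λ.edges,
    (Γ.τ e ∈ endpoints Γ S₀ → γ (φ.onE e) = 1) ∧
    (Γ.τ e ∉ endpoints Γ S₀ → Γ.τ e ∈ (γ (φ.onE e)).onV '' endpoints Γ S₀)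

/-- A good covering of a voltage graph: every cyclic walk of trivial voltage lifts
only to cyclic walks. -/
def IsGoodCovering {Δ Δtop : MGraph} {G : Type} [Group G] (γ : Δ.E → G)
    (μ : Hom Δtop Δ) : Prop :=
  ∀ p : Walk Δ, p.IsCyclic → voltage γ p = 1 →
    ∀ q : Walk Δtop, Walk.map μ q = p → q.IsCyclic

/-! ### Product graphs and common covers -/

/-- The product of two graphs. -/
def prodGraph (Δ₁ Δ₂ : MGraph) : MGraph where
  V := Δ₁.V × Δ₂.V
  E := Δ₁.E × Δ₂.E
  ι e := (Δ₁.ι e.1, Δ₂.ι e.2)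
  τ e := (Δ₁.τ e.1, Δ₂.τ e.2)

/-- First coordinate projection from a subgraph of a product graph. -/
def sgProj₁ {Δ₁ Δ₂ : MGraph} (H : Subgraph (prodGraph Δ₁ Δ₂)) : Hom H.toMGraph Δ₁ where
  onV v := (v.1 : Δ₁.V × Δ₂.V).1
  onE e := (e.1 : Δ₁.E × Δ₂.E).1
  map_ι e := rfl
  map_τ e := rfl

/-- Second coordinate projection from a subgraph of a product graph. -/
def sgProj₂ {Δ₁ Δ₂ : MGraph} (H : Subgraph (prodGraph Δ₁ Δ₂)) : Hom H.toMGraph Δ₂ where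
  onV v := (v.1 : Δ₁.V × Δ₂.V).2
  onE e := (e.1 : Δ₁.E × Δ₂.E).2
  map_ι e := rfl
  map_τ e := rfl

/-- A good common cover of two voltage graphs: a connected subgraph of the product graph
whose coordinate projections are coverings, each a good covering of the respective
voltage graph. -/
def IsGoodCommonCover {Δ₁ Δ₂ : MGraph} {K₁ K₂ : Type} [Group K₁] [Group K₂]
    (γ₁ : Δ₁.E → K₁) (γ₂ : Δ₂.E → K₂) (H : Subgraph (prodGraph Δ₁ Δ₂)) : Prop :=
  Connected H.toMGraph ∧
  IsCovering (sgProj₁ H) ∧ IsCovering (sgProj₂ H) ∧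
  IsGoodCovering γ₁ (sgProj₁ H) ∧ IsGoodCovering γ₂ (sgProj₂ H)

/-- A successful good common cover: both projections are regular, and there is an
automorphism `α` of the cover fixing a spanning tree set `S_⊤` such that the
correspondence between the condensed lifted voltages (via `α`) extends to a group
isomorphism of the generated voltage groups. -/
def IsSuccessfulGoodCommonCover {Δ₁ Δ₂ : MGraph} {K₁ K₂ : Type} [Group K₁] [Group K₂]
    (γ₁ : Δ₁.E → K₁) (γ₂ : Δ₂.E → K₂) (H : Subgraph (prodGraph Δ₁ Δ₂)) : Prop :=
  IsGoodCommonCover γ₁ γ₂ H ∧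
  IsRegular (sgProj₁ H) ∧ IsRegular (sgProj₂ H) ∧
  ∃ (Stop : Set H.toMGraph.E) (vtop : H.toMGraph.V)
    (γ₁' : H.toMGraph.E → K₁) (γ₂' : H.toMGraph.E → K₂) (α : Aut H.toMGraph),
    IsSpanningTreeSet H.toMGraph Stop ∧
    IsCondensation (fun e => γ₁ ((sgProj₁ H).onE e)) Stop vtop γ₁' ∧
    IsCondensation (fun e => γ₂ ((sgProj₂ H).onE e)) Stop vtop γ₂' ∧
    (∀ e ∈ Stop, α.onE e = e) ∧
    ∃ F : ↥(Subgroup.closure (Set.range γ₁')) ≃* ↥(Subgroup.closure (Set.range γ₂')),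
      ∀ e : H.toMGraph.E, (F (restrictToClosure γ₁' e) : K₂) = γ₂' (α.onE e)

/-- A good common cover with regular projections fails if it is not successful. -/
def FailsAsCommonCover {Δ₁ Δ₂ : MGraph} {K₁ K₂ : Type} [Group K₁] [Group K₂]
    (γ₁ : Δ₁.E → K₁) (γ₂ : Δ₂.E → K₂) (H : Subgraph (prodGraph Δ₁ Δ₂)) : Prop :=
  IsGoodCommonCover γ₁ γ₂ H ∧
  IsRegular (sgProj₁ H) ∧ IsRegular (sgProj₂ H) ∧
  ¬ IsSuccessfulGoodCommonCover γ₁ γ₂ H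



/-! ### Auxiliary material for Statement 2 -/

section Aux2

variable {Γ : MGraph}

/-- Reachability by a walk all of whose edges lie in a given edge set. -/
def ReachIn (Γ : MGraph) (s : Set Γ.E) (u v : Γ.V) : Prop :=
  ∃ w : Walk Γ, w.first = u ∧ w.last = v ∧ ∀ st ∈ w.steps, st.1 ∈ s

theorem ReachIn.refl (s : Set Γ.E) (u : Γ.V) : ReachIn Γ s u u :=
  ⟨⟨u, [], trivial⟩, rfl, rfl, by simp⟩

theorem ReachIn.mono {s t : Set Γ.E} (h : s ⊆ t) {u v : Γ.V}
    (hr : ReachIn Γ s u v) : ReachIn Γ t u v := by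
  obtain ⟨w, h1, h2, h3⟩ := hr
  exact ⟨w, h1, h2, fun st hst => h (h3 st hst)⟩

theorem ReachIn.trans {s : Set Γ.E} {u v x : Γ.V}
    (h₁ : ReachIn Γ s u v) (h₂ : ReachIn Γ s v x) : ReachIn Γ s u x := by
  obtain ⟨w, hw1, hw2, hw3⟩ := h₁
  obtain ⟨q, hq1, hq2, hq3⟩ := h₂
  refine ⟨w.append q (by rw [hw2, hq1]), hw1, by rw [Walk.append_last]; exact hq2, ?_⟩
  intro st hst
  rcases List.mem_append.1 hst with h | h
  · exact hw3 st h
  · exact hq3 st h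

theorem ReachIn.symm {s : Set Γ.E} {u v : Γ.V} (h : ReachIn Γ s u v) : ReachIn Γ s v u := by
  obtain ⟨w, h1, h2, h3⟩ := h
  refine ⟨w.reverse, by rw [show w.reverse.first = w.last from rfl, h2],
    by rw [w.reverse_last, h1], ?_⟩
  intro st hst
  obtain ⟨st', hst', rfl⟩ := List.mem_map.1 hst
  exact h3 st' (List.mem_reverse.1 hst')

theorem ReachIn.step {s : Set Γ.E} {u : Γ.V} (st : Γ.E × Bool) (hst : st.1 ∈ s)
    (h : ReachIn Γ s u (stepSrc Γ st)) : ReachIn Γ s u (stepTgt Γ st) :=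
  h.trans ⟨⟨stepSrc Γ st, [st], rfl, trivial⟩, rfl, rfl, by
    intro a ha; rw [List.mem_singleton] at ha; subst ha; exact hst⟩

theorem endOf_mem_endpoints {s : Set Γ.E} :
    ∀ (l : List (Γ.E × Bool)) (v : Γ.V), l ≠ [] → (∀ st ∈ l, st.1 ∈ s) →
      endOf Γ v l ∈ endpoints Γ s := by
  intro l
  induction l with
  | nil => intro v h _; exact absurd rfl h
  | cons st rest ih =>
    intro v _ hmem
    rcases rest with _ | ⟨a, rest'⟩
    · obtain ⟨e, b⟩ := st
      have he : e ∈ s := hmem (e, b) (List.mem_singleton.2 rfl)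
      cases b
      · exact ⟨e, he, Or.inl rfl⟩
      · exact ⟨e, he, Or.inr rfl⟩
    · exact ih (stepTgt Γ st) (by simp) (fun a ha => hmem a (List.mem_cons_of_mem _ ha))

theorem reachIn_last_cases {s : Set Γ.E} {u v : Γ.V} (h : ReachIn Γ s u v) :
    v = u ∨ v ∈ endpoints Γ s := by
  obtain ⟨w, h1, h2, h3⟩ := h
  rcases eq_or_ne w.steps [] with hnil | hne
  · left
    rw [← h1, ← h2]
    show endOf Γ w.first w.steps = w.first
    rw [hnil]
    rfl
  · right
    rw [← h2]
    exact endOf_mem_endpoints w.steps w.first hne h3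

theorem exists_boundary_step {Δ : MGraph} (C : Set Δ.V) :
    ∀ (l : List (Δ.E × Bool)) (v : Δ.V), chain Δ v l → v ∈ C → endOf Δ v l ∉ C →
      ∃ st ∈ l, stepSrc Δ st ∈ C ∧ stepTgt Δ st ∉ C := by
  intro l
  induction l with
  | nil => intro v _ hv hnv; exact absurd hv hnv
  | cons st rest ih =>
    intro v hch hv hnv
    by_cases h : stepTgt Δ st ∈ C
    · obtain ⟨st', h1, h2, h3⟩ := ih (stepTgt Δ st) hch.2 h hnv
      exact ⟨st', List.mem_cons_of_mem _ h1, h2, h3⟩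
    · exact ⟨st, List.mem_cons_self, hch.1 ▸ hv, h⟩

theorem Walk.map_last {Γ Δ : MGraph} (φ : Hom Γ Δ) (w : Walk Γ) :
    (w.map φ).last = φ.onV w.last :=
  endOf_map φ w.steps w.first

theorem exists_subwalk (Λ : Subgraph Γ) :
    ∀ (l : List (Γ.E × Bool)) (u : Γ.V), u ∈ Λ.verts → chain Γ u l →
      (∀ st ∈ l, st.1 ∈ Λ.edges) →
      ∃ w : Walk Λ.toMGraph, Λ.incl.onV w.first = u ∧ Λ.incl.onV w.last = endOf Γ u l := by
  intro l
  induction l with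
  | nil => intro u hu _ _; exact ⟨⟨⟨u, hu⟩, [], trivial⟩, rfl, rfl⟩
  | cons st rest ih =>
    intro u hu hch hmem
    obtain ⟨e, b⟩ := st
    obtain ⟨hsrc, hch2⟩ := hch
    subst hsrc
    have hst : e ∈ Λ.edges := hmem (e, b) (List.mem_cons_self)
    have htgt : stepTgt Γ (e, b) ∈ Λ.verts := by
      cases b
      · exact Λ.ι_mem e hst
      · exact Λ.τ_mem e hst
    obtain ⟨w, hw1, hw2⟩ := ih (stepTgt Γ (e, b)) htgt hch2
      (fun a ha => hmem a (List.mem_cons_of_mem _ ha))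
    obtain ⟨⟨x, hx⟩, ws, wok⟩ := w
    have hw1' : x = stepTgt Γ (e, b) := hw1
    subst hw1'
    have h2 : stepTgt Λ.toMGraph ((⟨e, hst⟩ : ↑Λ.edges), b) =
        (⟨stepTgt Γ (e, b), hx⟩ : ↑Λ.verts) := by
      cases b <;> rfl
    have h1 : stepSrc Λ.toMGraph ((⟨e, hst⟩ : ↑Λ.edges), b) =
        (⟨stepSrc Γ (e, b), hu⟩ : ↑Λ.verts) := by
      cases b <;> rfl
    refine ⟨⟨⟨stepSrc Γ (e, b), hu⟩, (⟨e, hst⟩, b) :: ws, h1, ?_⟩, rfl, ?_⟩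
    · rw [h2]; exact wok
    · show Λ.incl.onV (endOf Λ.toMGraph (stepTgt Λ.toMGraph (⟨e, hst⟩, b)) ws) = _
      rw [h2]
      exact hw2

theorem reachable_of_reachIn (Λ : Subgraph Γ) {u v : Γ.V}
    (hu : u ∈ Λ.verts) (hv : v ∈ Λ.verts) (h : ReachIn Γ Λ.edges u v) :
    Reachable Λ.toMGraph ⟨u, hu⟩ ⟨v, hv⟩ := by
  obtain ⟨q, h1, h2, h3⟩ := h
  subst h1
  obtain ⟨w, hw1, hw2⟩ := exists_subwalk Λ q.steps q.first hu q.ok h3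
  exact ⟨w, Subtype.ext hw1, Subtype.ext (hw2.trans h2)⟩

end Aux2

/-- Given a connected graph `Δ` with spanning tree set `S` and a
covering `φ : Γ → Δ`, there is a proper lift `Λ` of `Δ` in `Γ` containing an edge set
mapped by `φ` bijectively onto `S`, whose endpoints are the interior vertices of `Λ`. -/
theorem exists_proper_lift {Γ Δ : MGraph} (hΔ : Connected Δ)
    (S : Set Δ.E) (hS : IsSpanningTreeSet Δ S)
    (φ : Hom Γ Δ) (hφ : IsCovering φ) :
    ∃ (Λ : Subgraph Γ) (S₀ : Set Γ.E),
      IsProperLiftWith φ Λ S₀ ∧ Set.BijOn φ.onE S₀ S := by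
  classical
  rcases isEmpty_or_nonempty Δ.V with hEmp | hne
  · -- degenerate case: no vertices, hence no edges anywhere
    have hEe : IsEmpty Δ.E := ⟨fun e => hEmp.false (Δ.ι e)⟩
    have hS0 : S = ∅ := Set.eq_empty_of_isEmpty S
    refine ⟨⟨∅, ∅, fun e he => absurd he (Set.notMem_empty e),
        fun e he => absurd he (Set.notMem_empty e)⟩, ∅,
      ⟨⟨fun u _ => absurd u.2 (Set.notMem_empty _), ?_⟩, fun e he => he,
        by rw [Set.image_empty, ← hS0]; exact hS,
        fun e he => absurd he (Set.notMem_empty e)⟩, by rw [hS0]; exact Set.bijOn_empty _⟩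
    exact ⟨fun e he => trivial, fun e he e' he' _ => absurd he (Set.notMem_empty e),
      fun f _ => isEmptyElim f⟩
  · obtain ⟨v₀⟩ := hne
    obtain ⟨w₀, hw₀⟩ := hφ.surjV v₀
    -- Zorn: maximal partial lift of the tree
    set good : Set (Set Γ.E) := {s | (∀ e ∈ s, φ.onE e ∈ S) ∧ Set.InjOn φ.onE s ∧
      ∀ e ∈ s, ReachIn Γ s w₀ (Γ.ι e)} with hgood_def
    obtain ⟨s, hsmax⟩ : ∃ s, Maximal (· ∈ good) s := by
      apply zorn_subset
      intro c hc hchain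
      refine ⟨⋃₀ c, ⟨?_, ?_, ?_⟩, fun t ht => Set.subset_sUnion_of_mem ht⟩
      · rintro e ⟨t, htc, het⟩
        exact (hc htc).1 e het
      · rintro e ⟨t, htc, het⟩ e' ⟨t', htc', het'⟩ heq
        rcases hchain.total htc htc' with h | h
        · exact (hc htc').2.1 (h het) het' heq
        · exact (hc htc).2.1 het (h het') heq
      · rintro e ⟨t, htc, het⟩
        exact ((hc htc).2.2 e het).mono (Set.subset_sUnion_of_mem htc)
    have hsgood : s ∈ good := hsmax.1
    have hreachι : ∀ e ∈ s, ReachIn Γ s w₀ (Γ.ι e) := hsgood.2.2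
    have hreachτ : ∀ e ∈ s, ReachIn Γ s w₀ (Γ.τ e) := fun e he =>
      ReachIn.step (e, true) he (hreachι e he)
    have hreach_endpt : ∀ u ∈ endpoints Γ s, ReachIn Γ s w₀ u := by
      rintro u ⟨e, he, rfl | rfl⟩
      · exact hreachι e he
      · exact hreachτ e he
    -- maximality: any liftable new edge is already present
    have hmax_insert : ∀ e : Γ.E, φ.onE e ∈ S → φ.onE e ∉ φ.onE '' s →
        ReachIn Γ (insert e s) w₀ (Γ.ι e) → False := by
      intro e hfS hfnot hre
      have hes : e ∉ s := fun h => hfnot ⟨e, h, rfl⟩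
      have hgood' : insert e s ∈ good := by
        refine ⟨?_, ?_, ?_⟩
        · rintro e' (rfl | he')
          · exact hfS
          · exact hsgood.1 e' he'
        · exact (Set.injOn_insert hes).2 ⟨hsgood.2.1, hfnot⟩
        · rintro e' (rfl | he')
          · exact hre
          · exact (hreachι e' he').mono (Set.subset_insert _ _)
      have := hsmax.eq_of_subset hgood' (Set.subset_insert e s)
      exact hes (this ▸ Set.mem_insert e s)
    -- all of Δ.V is covered by reachable lifts
    set C : Set Δ.V := {v | ∃ w, φ.onV w = v ∧ ReachIn Γ s w₀ w} with hC_def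
    have hCall : ∀ v : Δ.V, v ∈ C := by
      by_contra h
      push_neg at h
      obtain ⟨v, hv⟩ := h
      -- a walk in the tree from v₀ to v
      obtain ⟨q, hq1, hq2, hqS⟩ : ∃ q : Walk Δ, q.first = v₀ ∧ q.last = v ∧
          ∀ st ∈ q.steps, st.1 ∈ S := by
        obtain ⟨wt, h1, h2⟩ := hS.2.1 ⟨v₀, hS.2.2 v₀⟩ ⟨v, hS.2.2 v⟩
        refine ⟨wt.map (edgeInduced Δ S).incl, congrArg (edgeInduced Δ S).incl.onV h1,
          (Walk.map_last _ wt).trans (congrArg (edgeInduced Δ S).incl.onV h2), ?_⟩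
        intro st hst
        obtain ⟨st', _, rfl⟩ := List.mem_map.1 hst
        exact st'.1.2
      have hv₀C : v₀ ∈ C := ⟨w₀, hw₀, ReachIn.refl s w₀⟩
      obtain ⟨⟨f, b⟩, hstmem, hsrc, htgt⟩ := exists_boundary_step C q.steps q.first q.ok
        (hq1 ▸ hv₀C) (by rw [show endOf Δ q.first q.steps = q.last from rfl, hq2]; exact hv)
      have hfS : f ∈ S := hqS (f, b) hstmem
      obtain ⟨w, hw, hrw⟩ := hsrc
      cases b with
      | true =>
        obtain ⟨e, he, hef⟩ := (hφ.bijOut w).surjOn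
          (show f ∈ Out Δ (φ.onV w) from hw.symm)
        have he' : Γ.ι e = w := he
        refine hmax_insert e (hef ▸ hfS) ?_ ((he' ▸ hrw).mono (Set.subset_insert _ _))
        rintro ⟨e', he's, heq⟩
        refine htgt ⟨Γ.τ e', ?_, hreachτ e' he's⟩
        show φ.onV (Γ.τ e') = stepTgt Δ (f, true)
        rw [← φ.map_τ, heq, hef]
        rfl
      | false =>
        obtain ⟨e, he, hef⟩ := (hφ.bijIn w).surjOn
          (show f ∈ In Δ (φ.onV w) from hw.symm)
        have he' : Γ.τ e = w := he
        refine hmax_insert e (hef ▸ hfS) ?_ ?_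
        · rintro ⟨e', he's, heq⟩
          refine htgt ⟨Γ.ι e', ?_, hreachι e' he's⟩
          show φ.onV (Γ.ι e') = stepTgt Δ (f, false)
          rw [← φ.map_ι, heq, hef]
          rfl
        · exact ReachIn.step (e, false) (Set.mem_insert e s)
            ((he' ▸ hrw).mono (Set.subset_insert _ _))
    -- image of the maximal lift is all of S
    have himg : φ.onE '' s = S := by
      apply Set.Subset.antisymm
      · rintro f ⟨e, he, rfl⟩
        exact hsgood.1 e he
      · intro f hf
        by_contra hfnot
        obtain ⟨w, hw, hrw⟩ := hCall (Δ.ι f)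
        obtain ⟨e, he, hef⟩ := (hφ.bijOut w).surjOn
          (show f ∈ Out Δ (φ.onV w) from hw.symm)
        have he' : Γ.ι e = w := he
        exact hmax_insert e (hef ▸ hf) (hef ▸ hfnot)
          ((he' ▸ hrw).mono (Set.subset_insert _ _))
    -- every vertex of Δ is covered by an endpoint of s
    have hcover : ∀ v : Δ.V, ∃ w ∈ endpoints Γ s, φ.onV w = v := by
      intro v
      obtain ⟨w, hw, hrw⟩ := hCall v
      rcases reachIn_last_cases hrw with rfl | hmem
      · -- w = w₀, so v = v₀
        obtain ⟨f, hfS, hfend⟩ := hS.2.2 v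
        have : f ∈ φ.onE '' s := himg ▸ hfS
        obtain ⟨e, hes, hef⟩ := this
        rcases hfend with h | h
        · exact ⟨Γ.ι e, ⟨e, hes, Or.inl rfl⟩, by rw [← φ.map_ι, hef, h, ← hw]⟩
        · exact ⟨Γ.τ e, ⟨e, hes, Or.inr rfl⟩, by rw [← φ.map_τ, hef, h, ← hw]⟩
      · exact ⟨w, hmem, hw⟩
    -- choice of lifts of every edge of Δ
    have hchoice : ∀ f : Δ.E, ∃ e : Γ.E, φ.onE e = f ∧ Γ.ι e ∈ endpoints Γ s ∧
        (f ∈ S → e ∈ s) := by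
      intro f
      by_cases hf : f ∈ S
      · have : f ∈ φ.onE '' s := himg ▸ hf
        obtain ⟨e, hes, hef⟩ := this
        exact ⟨e, hef, ⟨e, hes, Or.inl rfl⟩, fun _ => hes⟩
      · obtain ⟨w, hwend, hw⟩ := hcover (Δ.ι f)
        obtain ⟨e, he, hef⟩ := (hφ.bijOut w).surjOn
          (show f ∈ Out Δ (φ.onV w) from hw.symm)
        have he' : Γ.ι e = w := he
        exact ⟨e, hef, he' ▸ hwend, fun h => absurd h hf⟩
    choose ch hch1 hch2 hch3 using hchoice
    -- the lift
    refine ⟨⟨endpoints Γ (s ∪ Set.range ch), s ∪ Set.range ch,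
      fun e he => ⟨e, he, Or.inl rfl⟩, fun e he => ⟨e, he, Or.inr rfl⟩⟩, s, ⟨⟨?_, ?_⟩, ?_, ?_, ?_⟩, ?_⟩
    · -- Connected
      have hreachι' : ∀ e ∈ s ∪ Set.range ch, ReachIn Γ (s ∪ Set.range ch) w₀ (Γ.ι e) := by
        rintro e (hes | ⟨f, rfl⟩)
        · exact (hreachι e hes).mono Set.subset_union_left
        · exact (hreach_endpt _ (hch2 f)).mono Set.subset_union_left
      have hreachV : ∀ u ∈ endpoints Γ (s ∪ Set.range ch),
          ReachIn Γ (s ∪ Set.range ch) w₀ u := by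
        rintro u ⟨e, he, rfl | rfl⟩
        · exact hreachι' e he
        · exact ReachIn.step (e, true) he (hreachι' e he)
      intro u v
      obtain ⟨u, hu⟩ := u
      obtain ⟨v, hv⟩ := v
      exact reachable_of_reachIn _ hu hv ((hreachV u hu).symm.trans (hreachV v hv))
    · -- BijOn onto univ
      refine ⟨fun e _ => trivial, ?_, ?_⟩
      · rintro e (hes | ⟨f, rfl⟩) e' (hes' | ⟨f', rfl⟩) heq
        · exact hsgood.2.1 hes hes' heq
        · have hf'S : f' ∈ S := by rw [← hch1 f', ← heq]; exact hsgood.1 e hes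
          exact hsgood.2.1 hes (hch3 f' hf'S) heq
        · have hfS : f ∈ S := by rw [← hch1 f, heq]; exact hsgood.1 e' hes'
          exact hsgood.2.1 (hch3 f hfS) hes' heq
        · have : f = f' := by rw [← hch1 f, ← hch1 f', heq]
          rw [this]
      · intro f _
        exact ⟨ch f, Or.inr ⟨f, rfl⟩, hch1 f⟩
    · exact Set.subset_union_left
    · rw [himg]; exact hS
    · rintro e (hes | ⟨f, rfl⟩)
      · exact ⟨e, hes, Or.inl rfl⟩
      · exact hch2 f
    · -- BijOn s S
      exact ⟨hsgood.1, hsgood.2.1, fun f hf => ⟨ch f, hch3 f hf, hch1 f⟩⟩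

end VG
end

section
/- Let Γ be a connected graph, let Δ₁ and Δ₂ be finite graphs, and let φ_i : Γ → Δ_i (i = 1, 2) be regular coverings. Let Δ_⊤ be the graph whose vertices and edges are the nonempty intersections [x] = [x]₁ ∩ [x]₂ of the G_{φ₁}-orbit [x]₁ and the G_{φ₂}-orbit [x]₂ of vertices and edges x of Γ, with ι([e]) = [ι(e)] and τ([e]) = [τ(e)]. Then the map [x] ↦ (φ₁(x), φ₂(x)) is an isomorphism of Δ_⊤ onto a subgraph of the product graph Δ₁ × Δ₂, and under this isomorphism the coverings μ_i : Δ_⊤ → Δ_i, [x] ↦ [x]_i, become the coordinate projections (φ₁(x), φ₂(x)) ↦ φ_i(x). -/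
namespace VG

/-- The equivalence on vertices whose classes are the intersections
`[v]₁ ∩ [v]₂` of the `G₁`-orbit and the `G₂`-orbit of a vertex. -/
def meetSetoidV (Γ : MGraph) (G₁ G₂ : Subgroup (Aut Γ)) : Setoid Γ.V where
  r v w := (∃ g ∈ G₁, g.onV v = w) ∧ (∃ g ∈ G₂, g.onV v = w)
  iseqv := by
    constructor
    · intro v; exact ⟨⟨1, one_mem _, rfl⟩, ⟨1, one_mem _, rfl⟩⟩
    · rintro v w ⟨⟨g, hg, rfl⟩, ⟨h, hh, hhw⟩⟩
      refine ⟨⟨g⁻¹, inv_mem hg, g.onV.symm_apply_apply v⟩, ⟨h⁻¹, inv_mem hh, ?_⟩⟩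
      rw [← hhw]
      exact h.onV.symm_apply_apply v
    · rintro u v w ⟨⟨g, hg, rfl⟩, ⟨h, hh, hhv⟩⟩ ⟨⟨g', hg', rfl⟩, ⟨h', hh', hh'w⟩⟩
      refine ⟨⟨g' * g, mul_mem hg' hg, rfl⟩, ⟨h' * h, mul_mem hh' hh, ?_⟩⟩
      show h'.onV (h.onV u) = _
      rw [hhv]
      exact hh'w

/-- The analogous equivalence on edges. -/
def meetSetoidE (Γ : MGraph) (G₁ G₂ : Subgroup (Aut Γ)) : Setoid Γ.E where
  r e f := (∃ g ∈ G₁, g.onE e = f) ∧ (∃ g ∈ G₂, g.onE e = f)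
  iseqv := by
    constructor
    · intro e; exact ⟨⟨1, one_mem _, rfl⟩, ⟨1, one_mem _, rfl⟩⟩
    · rintro e f ⟨⟨g, hg, rfl⟩, ⟨h, hh, hhf⟩⟩
      refine ⟨⟨g⁻¹, inv_mem hg, g.onE.symm_apply_apply e⟩, ⟨h⁻¹, inv_mem hh, ?_⟩⟩
      rw [← hhf]
      exact h.onE.symm_apply_apply e
    · rintro e f d ⟨⟨g, hg, rfl⟩, ⟨h, hh, hhf⟩⟩ ⟨⟨g', hg', rfl⟩, ⟨h', hh', hh'd⟩⟩
      refine ⟨⟨g' * g, mul_mem hg' hg, rfl⟩, ⟨h' * h, mul_mem hh' hh, ?_⟩⟩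
      show h'.onE (h.onE e) = _
      rw [hhf]
      exact hh'd

/-- The graph `Δ_⊤` whose vertices and edges are the (nonempty) intersections
`[x] = [x]₁ ∩ [x]₂` of `G₁`- and `G₂`-orbits of vertices and edges of `Γ`,
with `ι [e] = [ι e]` and `τ [e] = [τ e]`. -/
def topGraph (Γ : MGraph) (G₁ G₂ : Subgroup (Aut Γ)) : MGraph where
  V := Quotient (meetSetoidV Γ G₁ G₂)
  E := Quotient (meetSetoidE Γ G₁ G₂)
  ι := Quotient.map' Γ.ι (by
    rintro e f ⟨⟨g, hg, rfl⟩, ⟨h, hh, hhf⟩⟩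
    exact ⟨⟨g, hg, (g.map_ι e).symm⟩, ⟨h, hh, by rw [← hhf]; exact (h.map_ι e).symm⟩⟩)
  τ := Quotient.map' Γ.τ (by
    rintro e f ⟨⟨g, hg, rfl⟩, ⟨h, hh, hhf⟩⟩
    exact ⟨⟨g, hg, (g.map_τ e).symm⟩, ⟨h, hh, by rw [← hhf]; exact (h.map_τ e).symm⟩⟩)

/-- The covering `μ₁ : Δ_⊤ → Δ₁`, `[x] ↦ [x]₁` (with `[x]₁` identified with `φ₁(x)`). -/
def topProj₁ {Γ Δ₁ : MGraph} (φ₁ : Hom Γ Δ₁) (G₂ : Subgroup (Aut Γ)) :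
    Hom (topGraph Γ (coverGroup φ₁) G₂) Δ₁ where
  onV := Quotient.lift φ₁.onV (by rintro v w ⟨⟨g, hg, rfl⟩, -⟩; exact (hg.1 v).symm)
  onE := Quotient.lift φ₁.onE (by rintro e f ⟨⟨g, hg, rfl⟩, -⟩; exact (hg.2 e).symm)
  map_ι := by
    intro e
    induction e using Quotient.ind with
    | _ e => exact φ₁.map_ι e
  map_τ := by
    intro e
    induction e using Quotient.ind with
    | _ e => exact φ₁.map_τ e

/-- The covering `μ₂ : Δ_⊤ → Δ₂`, `[x] ↦ [x]₂` (with `[x]₂` identified with `φ₂(x)`). -/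
def topProj₂ {Γ Δ₂ : MGraph} (φ₂ : Hom Γ Δ₂) (G₁ : Subgroup (Aut Γ)) :
    Hom (topGraph Γ G₁ (coverGroup φ₂)) Δ₂ where
  onV := Quotient.lift φ₂.onV (by rintro v w ⟨-, ⟨g, hg, rfl⟩⟩; exact (hg.1 v).symm)
  onE := Quotient.lift φ₂.onE (by rintro e f ⟨-, ⟨g, hg, rfl⟩⟩; exact (hg.2 e).symm)
  map_ι := by
    intro e
    induction e using Quotient.ind with
    | _ e => exact φ₂.map_ι e
  map_τ := by
    intro e
    induction e using Quotient.ind with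
    | _ e => exact φ₂.map_τ e

/-- For regular coverings `φᵢ : Γ → Δᵢ` with `Γ` connected and `Δᵢ`
finite, the map `[x] ↦ (φ₁(x), φ₂(x))` is an isomorphism of `Δ_⊤` onto a subgraph of
the product `Δ₁ × Δ₂`, under which the coverings `μᵢ : Δ_⊤ → Δᵢ` become the coordinate
projections. -/
theorem topGraph_iso_subgraph_of_prod {Γ Δ₁ Δ₂ : MGraph}
    [Finite Δ₁.V] [Finite Δ₁.E] [Finite Δ₂.V] [Finite Δ₂.E]
    (hΓ : Connected Γ)
    (φ₁ : Hom Γ Δ₁) (φ₂ : Hom Γ Δ₂)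
    (h₁ : IsCovering φ₁) (h₂ : IsCovering φ₂)
    (r₁ : IsRegular φ₁) (r₂ : IsRegular φ₂) :
    ∃ (H : Subgraph (prodGraph Δ₁ Δ₂))
      (ψ : Iso (topGraph Γ (coverGroup φ₁) (coverGroup φ₂)) H.toMGraph),
      (∀ x : Γ.V,
        H.incl.onV (ψ.onV (Quotient.mk (meetSetoidV Γ (coverGroup φ₁) (coverGroup φ₂)) x))
          = (φ₁.onV x, φ₂.onV x)) ∧
      (∀ e : Γ.E,
        H.incl.onE (ψ.onE (Quotient.mk (meetSetoidE Γ (coverGroup φ₁) (coverGroup φ₂)) e))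
          = (φ₁.onE e, φ₂.onE e)) ∧
      (∀ a, (H.incl.onV (ψ.onV a)).1 = (topProj₁ φ₁ (coverGroup φ₂)).onV a) ∧
      (∀ a, (H.incl.onV (ψ.onV a)).2 = (topProj₂ φ₂ (coverGroup φ₁)).onV a) ∧
      (∀ e, (H.incl.onE (ψ.onE e)).1 = (topProj₁ φ₁ (coverGroup φ₂)).onE e) ∧
      (∀ e, (H.incl.onE (ψ.onE e)).2 = (topProj₂ φ₂ (coverGroup φ₁)).onE e) := by
  classical
  set H : Subgraph (prodGraph Δ₁ Δ₂) :=
    { verts := Set.range (fun x : Γ.V => (φ₁.onV x, φ₂.onV x))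
      edges := Set.range (fun e : Γ.E => (φ₁.onE e, φ₂.onE e))
      ι_mem := by rintro e ⟨x, rfl⟩; exact ⟨Γ.ι x, by simp [prodGraph, φ₁.map_ι, φ₂.map_ι]⟩
      τ_mem := by rintro e ⟨x, rfl⟩; exact ⟨Γ.τ x, by simp [prodGraph, φ₁.map_τ, φ₂.map_τ]⟩ }
  let fV : Quotient (meetSetoidV Γ (coverGroup φ₁) (coverGroup φ₂)) → H.toMGraph.V :=
    Quotient.lift (fun x => ⟨(φ₁.onV x, φ₂.onV x), Set.mem_range_self x⟩)
      (by rintro v w ⟨⟨g, hg, rfl⟩, ⟨h, hh, hhw⟩⟩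
          exact Subtype.ext (Prod.ext (hg.1 v).symm (by rw [← hhw]; exact (hh.1 v).symm)))
  let fE : Quotient (meetSetoidE Γ (coverGroup φ₁) (coverGroup φ₂)) → H.toMGraph.E :=
    Quotient.lift (fun e => ⟨(φ₁.onE e, φ₂.onE e), Set.mem_range_self e⟩)
      (by rintro e f ⟨⟨g, hg, rfl⟩, ⟨h, hh, hhf⟩⟩
          exact Subtype.ext (Prod.ext (hg.2 e).symm (by rw [← hhf]; exact (hh.2 e).symm)))
  have bV : Function.Bijective fV := by
    constructor
    · intro a b
      induction a using Quotient.ind with | _ x =>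
      induction b using Quotient.ind with | _ y =>
      intro hxy
      have h := congrArg Subtype.val hxy
      have h1 : φ₁.onV x = φ₁.onV y := congrArg Prod.fst h
      have h2 : φ₂.onV x = φ₂.onV y := congrArg Prod.snd h
      exact Quotient.sound ⟨r₁.1 x y h1, r₂.1 x y h2⟩
    · rintro ⟨_, ⟨x, rfl⟩⟩
      exact ⟨Quotient.mk _ x, rfl⟩
  have bE : Function.Bijective fE := by
    constructor
    · intro a b
      induction a using Quotient.ind with | _ x =>
      induction b using Quotient.ind with | _ y =>
      intro hxy
      have h := congrArg Subtype.val hxy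
      have h1 : φ₁.onE x = φ₁.onE y := congrArg Prod.fst h
      have h2 : φ₂.onE x = φ₂.onE y := congrArg Prod.snd h
      exact Quotient.sound ⟨r₁.2 x y h1, r₂.2 x y h2⟩
    · rintro ⟨_, ⟨x, rfl⟩⟩
      exact ⟨Quotient.mk _ x, rfl⟩
  refine ⟨H, ⟨Equiv.ofBijective fV bV, Equiv.ofBijective fE bE, ?_, ?_⟩,
    fun x => rfl, fun e => rfl, ?_, ?_, ?_, ?_⟩
  · intro e
    induction e using Quotient.ind with | _ e =>
    exact Subtype.ext (Prod.ext (φ₁.map_ι e) (φ₂.map_ι e))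
  · intro e
    induction e using Quotient.ind with | _ e =>
    exact Subtype.ext (Prod.ext (φ₁.map_τ e) (φ₂.map_τ e))
  · intro a; induction a using Quotient.ind with | _ x => rfl
  · intro a; induction a using Quotient.ind with | _ x => rfl
  · intro e; induction e using Quotient.ind with | _ x => rfl
  · intro e; induction e using Quotient.ind with | _ x => rfl

end VG
end

section
/- Let Δ be a connected graph, let γ : E_Δ → G be a voltage assignment, and let γ' be a condensation of γ with respect to some spanning tree set of Δ and some base vertex. Then the derived graph Δ ×_{γ'} ⟨γ'(E_Δ)⟩ is connected, and Δ ×_{γ'} G is a disjoint union of [G : ⟨γ'(E_Δ)⟩] connected components, each isomorphic to Δ ×_{γ'} ⟨γ'(E_Δ)⟩. -/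
namespace VG

/-! ### Auxiliary lemmas for Statement 9 -/

section Aux

variable {Δ : MGraph} {G : Type} [Group G]

theorem voltage_single (γ' : Δ.E → G) (e : Δ.E) : voltage γ' (Walk.single e) = γ' e := by
  simp [voltage, Walk.single]

theorem voltage_append (γ' : Δ.E → G) (w₁ w₂ : Walk Δ) (h : w₁.last = w₂.first) :
    voltage γ' (w₁.append w₂ h) = voltage γ' w₁ * voltage γ' w₂ := by
  simp [voltage, Walk.append]

theorem flip_factor (γ' : Δ.E → G) (s : Δ.E × Bool) :
    (cond (flipStep s).2 (γ' (flipStep s).1) (γ' (flipStep s).1)⁻¹)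
      = (cond s.2 (γ' s.1) (γ' s.1)⁻¹)⁻¹ := by
  obtain ⟨e, b⟩ := s; cases b <;> simp [flipStep]

theorem prod_rev (γ' : Δ.E → G) (l : List (Δ.E × Bool)) :
    ((l.reverse.map flipStep).map fun s => cond s.2 (γ' s.1) (γ' s.1)⁻¹).prod
      = ((l.map fun s => cond s.2 (γ' s.1) (γ' s.1)⁻¹).prod)⁻¹ := by
  induction l with
  | nil => simp
  | cons s l ih =>
    rw [List.reverse_cons, List.map_append, List.map_append, List.prod_append, ih]
    simp [flip_factor γ' s, mul_inv_rev]

theorem voltage_reverse (γ' : Δ.E → G) (w : Walk Δ) :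
    voltage γ' w.reverse = (voltage γ' w)⁻¹ :=
  prod_rev γ' w.steps

theorem voltage_mem_closure (γ' : Δ.E → G) (p : Walk Δ) :
    voltage γ' p ∈ Subgroup.closure (Set.range γ') := by
  apply Subgroup.list_prod_mem
  intro x hx
  simp only [List.mem_map] at hx
  obtain ⟨s, _, rfl⟩ := hx
  cases hb : s.2
  · exact inv_mem (Subgroup.subset_closure ⟨s.1, rfl⟩)
  · exact Subgroup.subset_closure ⟨s.1, rfl⟩

theorem voltage_eq_one {γ' : Δ.E → G} {S : Set Δ.E} (h1 : ∀ e ∈ S, γ' e = 1)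
    (p : Walk Δ) (hp : ∀ s ∈ p.steps, s.1 ∈ S) : voltage γ' p = 1 := by
  apply List.prod_eq_one
  intro x hx
  simp only [List.mem_map] at hx
  obtain ⟨s, hs, rfl⟩ := hx
  have := h1 s.1 (hp s hs)
  cases s.2 <;> simp [this]

/-- Lifting a list of steps to the derived graph, starting at a given group element. -/
def liftSteps (γ' : Δ.E → G) : G → List (Δ.E × Bool) → List ((derivedGraph Δ γ').E × Bool)
  | _, [] => []
  | g, (e, true) :: rest => ((e, g), true) :: liftSteps γ' (g * γ' e) rest
  | g, (e, false) :: rest => ((e, g * (γ' e)⁻¹), false) :: liftSteps γ' (g * (γ' e)⁻¹) rest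

theorem liftSteps_chain (γ' : Δ.E → G) :
    ∀ (l : List (Δ.E × Bool)) (v : Δ.V) (g : G), chain Δ v l →
      chain (derivedGraph Δ γ') (v, g) (liftSteps γ' g l)
  | [], _, _, _ => trivial
  | (e, true) :: rest, v, g, h => by
    refine ⟨?_, ?_⟩
    · exact congrArg (fun z => (z, g)) h.1
    · exact liftSteps_chain γ' rest (Δ.τ e) (g * γ' e) h.2
  | (e, false) :: rest, v, g, h => by
    refine ⟨?_, ?_⟩
    · show (Δ.τ e, g * (γ' e)⁻¹ * γ' e) = (v, g)
      rw [inv_mul_cancel_right]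
      exact congrArg (fun z => (z, g)) h.1
    · exact liftSteps_chain γ' rest (Δ.ι e) (g * (γ' e)⁻¹) h.2

theorem liftSteps_endOf (γ' : Δ.E → G) :
    ∀ (l : List (Δ.E × Bool)) (v : Δ.V) (g : G),
      endOf (derivedGraph Δ γ') (v, g) (liftSteps γ' g l)
        = (endOf Δ v l, g * (l.map fun s => cond s.2 (γ' s.1) (γ' s.1)⁻¹).prod)
  | [], v, g => by simp [endOf, liftSteps]; rfl
  | (e, true) :: rest, v, g => by
    show endOf (derivedGraph Δ γ') (Δ.τ e, g * γ' e) (liftSteps γ' (g * γ' e) rest) = _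
    rw [liftSteps_endOf γ' rest (Δ.τ e) (g * γ' e)]
    simp [endOf, stepTgt, mul_assoc]; rfl
  | (e, false) :: rest, v, g => by
    show endOf (derivedGraph Δ γ') (Δ.ι e, g * (γ' e)⁻¹) (liftSteps γ' (g * (γ' e)⁻¹) rest) = _
    rw [liftSteps_endOf γ' rest (Δ.ι e) (g * (γ' e)⁻¹)]
    simp [endOf, stepTgt, mul_assoc]; rfl

/-- The lift of a walk to the derived graph, starting at a given group element. -/
def Walk.lift' (γ' : Δ.E → G) (p : Walk Δ) (g : G) : Walk (derivedGraph Δ γ') :=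
  ⟨(p.first, g), liftSteps γ' g p.steps, liftSteps_chain γ' p.steps p.first g p.ok⟩

theorem Walk.lift'_last (γ' : Δ.E → G) (p : Walk Δ) (g : G) :
    (Walk.lift' γ' p g).last = (p.last, g * voltage γ' p) :=
  liftSteps_endOf γ' p.steps p.first g

theorem reach_lift (γ' : Δ.E → G) (p : Walk Δ) (g : G) :
    Reachable (derivedGraph Δ γ') (p.first, g) (p.last, g * voltage γ' p) :=
  ⟨Walk.lift' γ' p g, rfl, Walk.lift'_last γ' p g⟩

theorem derived_endOf_snd (γ' : Δ.E → G) :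
    ∀ (l : List ((derivedGraph Δ γ').E × Bool)) (x : (derivedGraph Δ γ').V),
      chain (derivedGraph Δ γ') x l →
      ∃ h ∈ Subgroup.closure (Set.range γ'),
        (endOf (derivedGraph Δ γ') x l).2 = x.2 * h
  | [], x, _ => ⟨1, one_mem _, (mul_one _).symm⟩
  | ((e, g), true) :: rest, x, hc => by
    obtain ⟨h, hh, heq⟩ := derived_endOf_snd γ' rest _ hc.2
    refine ⟨γ' e * h, mul_mem (Subgroup.subset_closure ⟨e, rfl⟩) hh, ?_⟩
    have hx : x.2 = g := (congrArg Prod.snd hc.1).symm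
    show (endOf (derivedGraph Δ γ')
      (stepTgt (derivedGraph Δ γ') ((e, g), true)) rest).2 = x.2 * (γ' e * h)
    rw [heq, hx]
    show g * γ' e * h = g * (γ' e * h)
    rw [mul_assoc]
  | ((e, g), false) :: rest, x, hc => by
    obtain ⟨h, hh, heq⟩ := derived_endOf_snd γ' rest _ hc.2
    refine ⟨(γ' e)⁻¹ * h, mul_mem (inv_mem (Subgroup.subset_closure ⟨e, rfl⟩)) hh, ?_⟩
    have hx : x.2 = g * γ' e := (congrArg Prod.snd hc.1).symm
    show (endOf (derivedGraph Δ γ')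
      (stepTgt (derivedGraph Δ γ') ((e, g), false)) rest).2 = x.2 * ((γ' e)⁻¹ * h)
    rw [heq, hx]
    show g * h = g * γ' e * ((γ' e)⁻¹ * h)
    rw [mul_assoc, mul_inv_cancel_left]

theorem closure_reach (γ' : Δ.E → G) {S : Set Δ.E} {v₀ : Δ.V}
    (h1 : ∀ e ∈ S, γ' e = 1)
    (hret : ∀ e ∉ S, ∃ p₁ p₂ : Walk Δ, p₁.first = v₀ ∧ p₁.last = Δ.ι e ∧ p₂.first = Δ.τ e ∧
      p₂.last = v₀ ∧ (∀ s ∈ p₁.steps, s.1 ∈ S) ∧ (∀ s ∈ p₂.steps, s.1 ∈ S)) :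
    ∀ h ∈ Subgroup.closure (Set.range γ'),
      ∃ p : Walk Δ, p.first = v₀ ∧ p.last = v₀ ∧ voltage γ' p = h := by
  intro h hh
  induction hh using Subgroup.closure_induction with
  | mem g hg =>
    obtain ⟨e, rfl⟩ := hg
    by_cases he : e ∈ S
    · exact ⟨⟨v₀, [], trivial⟩, rfl, rfl, by simp [voltage, h1 e he]⟩
    · obtain ⟨p₁, p₂, hf₁, hl₁, hf₂, hl₂, hs₁, hs₂⟩ := hret e he
      have hmid : (p₁.append (Walk.single e) hl₁).last = p₂.first := by
        rw [Walk.append_last p₁ (Walk.single e) hl₁]; exact hf₂.symm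
      refine ⟨(p₁.append (Walk.single e) hl₁).append p₂ hmid, hf₁, ?_, ?_⟩
      · rw [Walk.append_last]; exact hl₂
      · rw [voltage_append, voltage_append γ' p₁ (Walk.single e) hl₁, voltage_single,
          voltage_eq_one h1 p₁ hs₁, voltage_eq_one h1 p₂ hs₂, one_mul, mul_one]
  | one => exact ⟨⟨v₀, [], trivial⟩, rfl, rfl, rfl⟩
  | mul a b _ _ iha ihb =>
    obtain ⟨pa, hfa, hla, hva⟩ := iha
    obtain ⟨pb, hfb, hlb, hvb⟩ := ihb
    refine ⟨pa.append pb (by rw [hla, hfb]), hfa, ?_, ?_⟩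
    · rw [Walk.append_last]; exact hlb
    · rw [voltage_append, hva, hvb]
  | inv a _ iha =>
    obtain ⟨pa, hfa, hla, hva⟩ := iha
    exact ⟨pa.reverse, hla, by rw [Walk.reverse_last]; exact hfa,
      by rw [voltage_reverse, hva]⟩

theorem reach_iff (γ' : Δ.E → G) (hΔ : Connected Δ) {S : Set Δ.E} {v₀ : Δ.V}
    (h1 : ∀ e ∈ S, γ' e = 1)
    (hret : ∀ e ∉ S, ∃ p₁ p₂ : Walk Δ, p₁.first = v₀ ∧ p₁.last = Δ.ι e ∧ p₂.first = Δ.τ e ∧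
      p₂.last = v₀ ∧ (∀ s ∈ p₁.steps, s.1 ∈ S) ∧ (∀ s ∈ p₂.steps, s.1 ∈ S))
    (x y : Δ.V × G) :
    Reachable (derivedGraph Δ γ') x y ↔ x.2⁻¹ * y.2 ∈ Subgroup.closure (Set.range γ') := by
  obtain ⟨x1, x2⟩ := x
  obtain ⟨y1, y2⟩ := y
  constructor
  · rintro ⟨w, hw1, hw2⟩
    obtain ⟨h, hh, heq⟩ := derived_endOf_snd γ' w.steps w.first w.ok
    have hy : y2 = x2 * h := by
      have : w.last.2 = w.first.2 * h := heq
      rw [hw1, hw2] at this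
      exact this
    show x2⁻¹ * y2 ∈ _
    rw [hy, inv_mul_cancel_left]
    exact hh
  · intro hmem
    obtain ⟨q₁, hq₁f, hq₁l⟩ := hΔ x1 v₀
    obtain ⟨q₂, hq₂f, hq₂l⟩ := hΔ v₀ y1
    set w₁ := voltage γ' q₁ with hw₁def
    set w₂ := voltage γ' q₂ with hw₂def
    have hw₁ := voltage_mem_closure γ' q₁
    have hw₂ := voltage_mem_closure γ' q₂
    have hh' : w₁⁻¹ * (x2⁻¹ * y2) * w₂⁻¹ ∈ Subgroup.closure (Set.range γ') :=
      mul_mem (mul_mem (inv_mem hw₁) hmem) (inv_mem hw₂)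
    obtain ⟨c, hcf, hcl, hcv⟩ := closure_reach γ' h1 hret _ hh'
    have r1 : Reachable (derivedGraph Δ γ') (x1, x2) (v₀, x2 * w₁) := by
      have := reach_lift γ' q₁ x2
      rw [hq₁f, hq₁l] at this
      exact this
    have r2 : Reachable (derivedGraph Δ γ') (v₀, x2 * w₁)
        (v₀, x2 * w₁ * (w₁⁻¹ * (x2⁻¹ * y2) * w₂⁻¹)) := by
      have := reach_lift γ' c (x2 * w₁)
      rw [hcf, hcl, hcv] at this
      exact this
    have r3 : Reachable (derivedGraph Δ γ')
        (v₀, x2 * w₁ * (w₁⁻¹ * (x2⁻¹ * y2) * w₂⁻¹)) (y1, y2) := by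
      have := reach_lift γ' q₂ (x2 * w₁ * (w₁⁻¹ * (x2⁻¹ * y2) * w₂⁻¹))
      rw [hq₂f, hq₂l] at this
      have heq : x2 * w₁ * (w₁⁻¹ * (x2⁻¹ * y2) * w₂⁻¹) * w₂ = y2 := by group
      rw [heq] at this
      exact this
    exact (r1.trans r2).trans r3

end Aux

/-- Let `Δ` be connected, `γ : E_Δ → G` a voltage assignment and `γ'`
a condensation of `γ` (w.r.t. a spanning tree set `S` and base vertex `v₀`).  Then
`Δ ×_{γ'} ⟨γ'(E_Δ)⟩` is connected, every connected component of `Δ ×_{γ'} G` is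
isomorphic to `Δ ×_{γ'} ⟨γ'(E_Δ)⟩`, and the set of components is in bijection with
the coset space `G/⟨γ'(E_Δ)⟩` (so there are `[G : ⟨γ'(E_Δ)⟩]` of them). -/
theorem condensation_derived_components {Δ : MGraph} {G : Type} [Group G]
    (γ γ' : Δ.E → G) (hΔ : Connected Δ)
    (S : Set Δ.E) (hS : IsSpanningTreeSet Δ S) (v₀ : Δ.V)
    (hcond : IsCondensation γ S v₀ γ') :
    Connected (derivedGraph Δ (restrictToClosure γ')) ∧
    (∀ x : (derivedGraph Δ γ').V,
      Nonempty (Iso (componentOf (derivedGraph Δ γ') x).toMGraph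
        (derivedGraph Δ (restrictToClosure γ')))) ∧
    Nonempty (Quotient (reachSetoid (derivedGraph Δ γ')) ≃
      G ⧸ Subgroup.closure (Set.range γ')) := by
  have h1 : ∀ e ∈ S, γ' e = 1 := hcond.1
  have hret : ∀ e ∉ S, ∃ p₁ p₂ : Walk Δ, p₁.first = v₀ ∧ p₁.last = Δ.ι e ∧ p₂.first = Δ.τ e ∧
      p₂.last = v₀ ∧ (∀ s ∈ p₁.steps, s.1 ∈ S) ∧ (∀ s ∈ p₂.steps, s.1 ∈ S) := by
    intro e he
    obtain ⟨p₁, p₂, a₁, a₂, a₃, a₄, _, _, a₅, a₆, _⟩ := hcond.2 e he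
    exact ⟨p₁, p₂, a₁, a₂, a₃, a₄, a₅, a₆⟩
  have h1' : ∀ e ∈ S, restrictToClosure γ' e = 1 := fun e he => Subtype.ext (h1 e he)
  have hmap : Subgroup.map (Subgroup.closure (Set.range γ')).subtype
      (Subgroup.closure (Set.range (restrictToClosure γ')))
      = Subgroup.closure (Set.range γ') := by
    rw [MonoidHom.map_closure, ← Set.range_comp]
    rfl
  have hmemH : ∀ z : ↥(Subgroup.closure (Set.range γ')),
      z ∈ Subgroup.closure (Set.range (restrictToClosure γ')) := by
    intro z
    have hz : (z : G) ∈ Subgroup.map (Subgroup.closure (Set.range γ')).subtype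
        (Subgroup.closure (Set.range (restrictToClosure γ'))) := by
      rw [hmap]; exact z.2
    obtain ⟨y, hy, hyy⟩ := Subgroup.mem_map.mp hz
    exact (Subtype.ext hyy : y = z) ▸ hy
  refine ⟨?_, ?_, ?_⟩
  · -- connectivity of the derived graph over the closure subgroup
    intro x y
    exact (reach_iff (restrictToClosure γ') hΔ h1' hret x y).mpr (hmemH _)
  · -- each component is isomorphic to the derived graph over the closure subgroup
    rintro ⟨v, g⟩
    have key : ∀ y : Δ.V × G, Reachable (derivedGraph Δ γ') (v, g) y ↔
        g⁻¹ * y.2 ∈ Subgroup.closure (Set.range γ') :=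
      fun y => reach_iff γ' hΔ h1 hret (v, g) y
    refine ⟨{ onV := ?_, onE := ?_, map_ι := ?_, map_τ := ?_ }⟩
    · exact
      { toFun := fun u => (u.1.1, ⟨g⁻¹ * u.1.2, (key u.1).mp u.2⟩)
        invFun := fun p => ⟨(p.1, g * p.2.1),
          (key (p.1, g * p.2.1)).mpr
            (show g⁻¹ * (g * p.2.1) ∈ _ by rw [inv_mul_cancel_left]; exact p.2.2)⟩
        left_inv := fun u => Subtype.ext (by
          show (u.1.1, g * (g⁻¹ * u.1.2)) = u.1
          rw [mul_inv_cancel_left]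
          exact rfl)
        right_inv := fun p => by
          obtain ⟨p1, p2⟩ := p
          exact Prod.ext rfl (Subtype.ext (inv_mul_cancel_left g p2.1)) }
    · exact
      { toFun := fun e => (e.1.1, ⟨g⁻¹ * e.1.2, (key ((derivedGraph Δ γ').ι e.1)).mp e.2⟩)
        invFun := fun p => ⟨(p.1, g * p.2.1),
          (key ((derivedGraph Δ γ').ι (p.1, g * p.2.1))).mpr
            (show g⁻¹ * (g * p.2.1) ∈ _ by rw [inv_mul_cancel_left]; exact p.2.2)⟩
        left_inv := fun e => Subtype.ext (by
          show (e.1.1, g * (g⁻¹ * e.1.2)) = e.1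
          rw [mul_inv_cancel_left]
          exact rfl)
        right_inv := fun p => by
          obtain ⟨p1, p2⟩ := p
          exact Prod.ext rfl (Subtype.ext (inv_mul_cancel_left g p2.1)) }
    · intro e
      rfl
    · intro e
      exact Prod.ext rfl (Subtype.ext (mul_assoc _ _ _))
  · -- components ↔ cosets
    have compat : ∀ a b : (derivedGraph Δ γ').V, (reachSetoid (derivedGraph Δ γ')).r a b →
        (QuotientGroup.mk a.2 : G ⧸ Subgroup.closure (Set.range γ'))
          = QuotientGroup.mk b.2 := by
      intro a b hab
      exact (QuotientGroup.eq).mpr ((reach_iff γ' hΔ h1 hret a b).mp hab)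
    refine ⟨Equiv.ofBijective
      (Quotient.lift (fun y : (derivedGraph Δ γ').V =>
        (QuotientGroup.mk y.2 : G ⧸ Subgroup.closure (Set.range γ'))) compat) ⟨?_, ?_⟩⟩
    · intro q₁ q₂ hq
      refine Quotient.inductionOn₂ q₁ q₂ (fun a b h => ?_) hq
      exact Quotient.sound ((reach_iff γ' hΔ h1 hret a b).mpr ((QuotientGroup.eq).mp h))
    · intro q
      obtain ⟨g, rfl⟩ := QuotientGroup.mk_surjective q
      exact ⟨Quotient.mk _ (v₀, g), rfl⟩

end VG
end

section
/- Let (Δ, γ) be a connected voltage graph and let G = ⟨γ(E_Δ)⟩ be the group generated by the voltages assigned to Δ. For any connected component Γ₀ of the derived graph Δ ×_γ G, any spanning tree set S of Δ, and any base vertex v₀ of Δ, the condensation γ_S of γ satisfies Γ₀ ≅ Δ ×_{γ_S} ⟨γ_S(E_Δ)⟩. -/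
namespace VG

/-! ### Auxiliary material for Statement 10 -/

section Stmt10Aux

variable {Δ : MGraph} {G : Type} [Group G]

/-- Voltage of a list of steps. -/
def wvolt (γ : Δ.E → G) (l : List (Δ.E × Bool)) : G :=
  (l.map fun s => cond s.2 (γ s.1) (γ s.1)⁻¹).prod

theorem voltage_eq_wvolt (γ : Δ.E → G) (w : Walk Δ) : voltage γ w = wvolt γ w.steps := rfl

theorem wvolt_cons (γ : Δ.E → G) (s : Δ.E × Bool) (l : List (Δ.E × Bool)) :
    wvolt γ (s :: l) = cond s.2 (γ s.1) (γ s.1)⁻¹ * wvolt γ l := by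
  simp [wvolt]

theorem wvolt_append (γ : Δ.E → G) (l₁ l₂ : List (Δ.E × Bool)) :
    wvolt γ (l₁ ++ l₂) = wvolt γ l₁ * wvolt γ l₂ := by
  simp [wvolt]

theorem wvolt_reverse (γ : Δ.E → G) (l : List (Δ.E × Bool)) :
    wvolt γ (l.reverse.map flipStep) = (wvolt γ l)⁻¹ := by
  induction l with
  | nil => simp [wvolt]
  | cons s rest ih =>
    rw [List.reverse_cons, List.map_append, wvolt_append, ih, wvolt_cons, mul_inv_rev]
    congr 1
    obtain ⟨e, b⟩ := s
    cases b <;> simp [wvolt, flipStep]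

theorem wvolt_ones (γ : Δ.E → G) (l : List (Δ.E × Bool)) (h : ∀ s ∈ l, γ s.1 = 1) :
    wvolt γ l = 1 := by
  induction l with
  | nil => rfl
  | cons s rest ih =>
    rw [wvolt_cons, h s (List.mem_cons_self), ih fun t ht => h t (List.mem_cons_of_mem _ ht)]
    cases s.2 <;> simp

theorem chain_split {Γ : MGraph} (l₁ l₂ : List (Γ.E × Bool)) (v : Γ.V)
    (h : chain Γ v (l₁ ++ l₂)) : chain Γ v l₁ ∧ chain Γ (endOf Γ v l₁) l₂ := by
  induction l₁ generalizing v with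
  | nil => exact ⟨trivial, h⟩
  | cons s rest ih =>
    obtain ⟨h1, h2⟩ := h
    obtain ⟨ha, hb⟩ := ih _ h2
    exact ⟨⟨h1, ha⟩, hb⟩

theorem vertsOf_eq_map {Γ : MGraph} (v : Γ.V) (l : List (Γ.E × Bool)) :
    vertsOf Γ v l = (List.range (l.length + 1)).map (fun i => endOf Γ v (l.take i)) := by
  induction l generalizing v with
  | nil => rfl
  | cons s rest ih =>
    conv_rhs => rw [show (s :: rest).length = rest.length + 1 from rfl,
      List.range_succ_eq_map, List.map_cons, List.map_map]
    rw [vertsOf, ih (stepTgt Γ s)]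
    congr 1

theorem exists_dup_of_not_nodup_map {α β : Type*} (f : α → β) (l : List α)
    (hl : l.Nodup) (h : ¬ (l.map f).Nodup) :
    ∃ x ∈ l, ∃ y ∈ l, f x = f y ∧ x ≠ y := by
  by_contra hc
  push_neg at hc
  exact h (List.Nodup.map_on hc hl)

theorem exists_split_of_not_nodup_map {α β : Type*} (f : α → β) :
    ∀ l : List α, ¬ (l.map f).Nodup →
      ∃ (a : List α) (x : α) (b : List α) (y : α) (c : List α),
        l = a ++ x :: b ++ y :: c ∧ f x = f y := by
  intro l
  induction l with
  | nil => intro h; exact absurd List.nodup_nil h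
  | cons s rest ih =>
    intro h
    rw [List.map_cons, List.nodup_cons] at h
    by_cases hmem : f s ∈ rest.map f
    · obtain ⟨y, hy, hfy⟩ := List.exists_of_mem_map hmem
      obtain ⟨b, c, rfl⟩ := List.append_of_mem hy
      exact ⟨[], s, b, y, c, rfl, hfy.symm⟩
    · have hnn : ¬ (rest.map f).Nodup := fun hn => h ⟨hmem, hn⟩
      obtain ⟨a, x, b, y, c, rfl, hf⟩ := ih hnn
      exact ⟨s :: a, x, b, y, c, rfl, hf⟩

/-- The inverse of an isomorphism. -/
def Iso.symm' {Γ Δ' : MGraph} (φ : Iso Γ Δ') : Iso Δ' Γ :=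
  ⟨φ.onV.symm, φ.onE.symm,
   fun e => by
     have h := φ.map_ι (φ.onE.symm e)
     rw [Equiv.apply_symm_apply] at h
     rw [h, Equiv.symm_apply_apply],
   fun e => by
     have h := φ.map_τ (φ.onE.symm e)
     rw [Equiv.apply_symm_apply] at h
     rw [h, Equiv.symm_apply_apply]⟩

/-- Composition of isomorphisms. -/
def Iso.trans' {Γ₁ Γ₂ Γ₃ : MGraph} (φ : Iso Γ₁ Γ₂) (ψ : Iso Γ₂ Γ₃) : Iso Γ₁ Γ₃ :=
  ⟨φ.onV.trans ψ.onV, φ.onE.trans ψ.onE,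
   fun e => by simp only [Equiv.trans_apply]; rw [ψ.map_ι, φ.map_ι],
   fun e => by simp only [Equiv.trans_apply]; rw [ψ.map_τ, φ.map_τ]⟩

theorem reach_map {Γ Δ' : MGraph} (φ : Hom Γ Δ') {u v : Γ.V} (h : Reachable Γ u v) :
    Reachable Δ' (φ.onV u) (φ.onV v) := by
  obtain ⟨w, h1, h2⟩ := h
  exact ⟨w.map φ, congrArg φ.onV h1,
    (endOf_map φ w.steps w.first).trans (congrArg φ.onV h2)⟩

/-- An isomorphism of graphs induces an isomorphism of corresponding components. -/
def isoComponent {Γ Δ' : MGraph} (φ : Iso Γ Δ') (x : Γ.V) :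
    Iso (componentOf Γ x).toMGraph (componentOf Δ' (φ.onV x)).toMGraph where
  onV :=
    { toFun := fun p => ⟨φ.onV p.1, reach_map φ.toHom p.2⟩
      invFun := fun p => ⟨φ.onV.symm p.1, by
        have h := reach_map (Iso.symm' φ).toHom p.2
        simp only [Iso.symm', Iso.toHom] at h
        rwa [Equiv.symm_apply_apply] at h⟩
      left_inv := fun p => Subtype.ext (φ.onV.symm_apply_apply p.1)
      right_inv := fun p => Subtype.ext (φ.onV.apply_symm_apply p.1) }
  onE :=
    { toFun := fun p => ⟨φ.onE p.1, by
        have h := reach_map φ.toHom p.2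
        show Reachable Δ' (φ.onV x) (Δ'.ι (φ.onE p.1))
        rw [φ.map_ι]
        exact h⟩
      invFun := fun p => ⟨φ.onE.symm p.1, by
        have h := reach_map (Iso.symm' φ).toHom p.2
        simp only [Iso.symm', Iso.toHom] at h
        rw [Equiv.symm_apply_apply] at h
        have hE := (Iso.symm' φ).map_ι p.1
        simp only [Iso.symm'] at hE
        show Reachable Γ x (Γ.ι (φ.onE.symm p.1))
        rw [hE]
        exact h⟩
      left_inv := fun p => Subtype.ext (φ.onE.symm_apply_apply p.1)
      right_inv := fun p => Subtype.ext (φ.onE.apply_symm_apply p.1) }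
  map_ι e := Subtype.ext (φ.map_ι e.1)
  map_τ e := Subtype.ext (φ.map_τ e.1)

/-- In an acyclic graph, every closed walk has trivial voltage. -/
theorem acyclic_closed_wvolt {Γ : MGraph} (hac : Acyclic Γ) (γ : Γ.E → G) :
    ∀ (n : ℕ) (l : List (Γ.E × Bool)) (v : Γ.V), l.length = n → chain Γ v l →
      endOf Γ v l = v → wvolt γ l = 1 := by
  intro n
  induction n using Nat.strong_induction_on with
  | _ n IH =>
    intro l v hlen hch hcyc
    -- splitting off a closed subwalk at a repeated vertex
    have split : ∀ i j : ℕ, i < j → j ≤ n → (0 < i ∨ j < n) →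
        endOf Γ v (l.take i) = endOf Γ v (l.take j) → wvolt γ l = 1 := by
      intro i j hij hjn hne hV
      have hij' : i ≤ j := le_of_lt hij
      have hAB : l.take i ++ (l.drop i).take (j - i) = l.take j := by
        rw [← List.take_add]
        congr 1
        omega
      have hl : l = (l.take i ++ (l.drop i).take (j - i)) ++ l.drop j := by
        rw [hAB]
        exact (List.take_append_drop j l).symm
      have hch' := hch
      rw [hl, List.append_assoc] at hch'
      obtain ⟨hchA, hchBC⟩ := chain_split _ _ _ hch'
      obtain ⟨hchB, hchC⟩ := chain_split _ _ _ hchBC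
      have hmid : endOf Γ (endOf Γ v (l.take i)) ((l.drop i).take (j - i))
          = endOf Γ v (l.take j) := by
        rw [← endOf_append, hAB]
      -- middle closed walk
      have hB1 : wvolt γ ((l.drop i).take (j - i)) = 1 := by
        refine IH (j - i) (by omega) _ (endOf Γ v (l.take i)) ?_ hchB ?_
        · rw [List.length_take, List.length_drop, hlen]; omega
        · rw [hmid, ← hV]
      -- outer closed walk
      have houter : endOf Γ v (l.take i ++ l.drop j) = v := by
        rw [endOf_append, hV, ← endOf_append, List.take_append_drop]
        exact hcyc
      rw [hmid, ← hV] at hchC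
      have hAC : wvolt γ (l.take i ++ l.drop j) = 1 := by
        refine IH (n - (j - i)) (by omega) _ v ?_ ?_ houter
        · rw [List.length_append, List.length_take, List.length_drop, hlen]; omega
        · exact chain_append Γ _ _ _ hchA hchC
      have hw : wvolt γ ((l.take i ++ (l.drop i).take (j - i)) ++ l.drop j) = wvolt γ l := by
        rw [← hl]
      rw [← hw, wvolt_append, wvolt_append, hB1, mul_one, ← wvolt_append]
      exact hAC
    by_cases h1 : ((List.range n).map (fun i => endOf Γ v (l.take i))).Nodup
    case neg =>
      obtain ⟨i, hi, j, hj, he, hne⟩ :=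
        exists_dup_of_not_nodup_map _ _ (List.nodup_range) h1
      rw [List.mem_range] at hi hj
      rcases Ne.lt_or_gt hne with h | h
      · exact split i j h (le_of_lt hj) (Or.inr hj) he
      · exact split j i h (le_of_lt hi) (Or.inr hi) he.symm
    by_cases h2 : ((List.range n).map (fun i => endOf Γ v (l.take (i + 1)))).Nodup
    case neg =>
      obtain ⟨i, hi, j, hj, he, hne⟩ :=
        exists_dup_of_not_nodup_map _ _ (List.nodup_range) h2
      rw [List.mem_range] at hi hj
      rcases Ne.lt_or_gt hne with h | h
      · exact split (i + 1) (j + 1) (by omega) (by omega) (Or.inl (by omega)) he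
      · exact split (j + 1) (i + 1) (by omega) (by omega) (Or.inl (by omega)) he.symm
    by_cases hnil : l = []
    · subst hnil; rfl
    have hverts : vertsOf Γ v l
        = (List.range (n + 1)).map (fun i => endOf Γ v (l.take i)) := by
      rw [vertsOf_eq_map, hlen]
    have hdrop : (vertsOf Γ v l).dropLast.Nodup := by
      rw [hverts, List.range_succ, List.map_append]
      simp only [List.map_cons, List.map_nil]
      rw [List.dropLast_concat]
      exact h1
    have htail : (vertsOf Γ v l).tail.Nodup := by
      rw [hverts, List.range_succ_eq_map, List.map_cons, List.tail_cons, List.map_map]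
      exact h2
    by_cases h3 : (l.map Prod.fst).Nodup
    · exact absurd ⟨⟨v, l, hch⟩, hnil, hcyc, h3, hdrop, htail⟩ hac
    -- an edge is repeated: derive a contradiction (or a 2-step backtrack)
    obtain ⟨a, x, b, y, c, heq, hxy⟩ := exists_split_of_not_nodup_map Prod.fst l h3
    have hinj1 : ∀ i' j' : ℕ, i' < n → j' < n →
        endOf Γ v (l.take i') = endOf Γ v (l.take j') → i' = j' := fun i' j' hi hj he =>
      List.inj_on_of_nodup_map h1 (List.mem_range.mpr hi) (List.mem_range.mpr hj) he
    have hinj2 : ∀ i' j' : ℕ, i' < n → j' < n →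
        endOf Γ v (l.take (i' + 1)) = endOf Γ v (l.take (j' + 1)) → i' = j' :=
      fun i' j' hi hj he =>
      List.inj_on_of_nodup_map h2 (List.mem_range.mpr hi) (List.mem_range.mpr hj) he
    have htk : ∀ (p q : List (Γ.E × Bool)) (m : ℕ), l = p ++ q → p.length = m →
        l.take m = p := by
      rintro p q m rfl rfl
      exact List.take_left
    have hn : n = a.length + 1 + b.length + 1 + c.length := by
      rw [← hlen, heq]
      simp [List.length_append]
      omega
    have hch2 := hch
    rw [heq] at hch2
    obtain ⟨hch3, hch4⟩ := chain_split (a ++ x :: b) (y :: c) v hch2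
    obtain ⟨hchA, hchXB⟩ := chain_split a (x :: b) v hch3
    have hsx : stepSrc Γ x = endOf Γ v a := hchXB.1
    have hsy : stepSrc Γ y = endOf Γ v (a ++ x :: b) := hch4.1
    have htk1 : l.take a.length = a :=
      htk a (x :: (b ++ y :: c)) _ (by rw [heq]; simp) rfl
    have htk2 : l.take (a.length + 1) = a ++ [x] :=
      htk (a ++ [x]) (b ++ y :: c) _ (by rw [heq]; simp) (by simp)
    have htk3 : l.take (a.length + 1 + b.length) = a ++ x :: b :=
      htk (a ++ x :: b) (y :: c) _ (by rw [heq])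
        (by simp only [List.length_append, List.length_cons]; omega)
    have htk4 : l.take (a.length + 1 + b.length + 1) = a ++ x :: (b ++ [y]) :=
      htk (a ++ x :: (b ++ [y])) c _ (by rw [heq]; simp)
        (by simp only [List.length_append, List.length_cons, List.length_nil]; omega)
    have hVi : endOf Γ v (l.take a.length) = stepSrc Γ x := by rw [htk1]; exact hsx.symm
    have hVi1 : endOf Γ v (l.take (a.length + 1)) = stepTgt Γ x := by
      rw [htk2, endOf_append]; rfl
    have hVj : endOf Γ v (l.take (a.length + 1 + b.length)) = stepSrc Γ y := by
      rw [htk3]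
      exact hsy.symm
    have hVj1 : endOf Γ v (l.take (a.length + 1 + b.length + 1)) = stepTgt Γ y := by
      rw [htk4, endOf_append]
      show endOf Γ (stepTgt Γ x) (b ++ [y]) = _
      rw [endOf_append]; rfl
    by_cases hbb : x.2 = y.2
    · -- same direction: the two sources coincide, contradiction
      have hss : stepSrc Γ x = stepSrc Γ y := by
        simp only [stepSrc, hxy, hbb]
      have := hinj1 a.length (a.length + 1 + b.length) (by omega) (by omega)
        (by rw [hVi, hVj, hss])
      omega
    · -- opposite directions
      have hb' : y.2 = !x.2 := Bool.eq_not_of_ne (Ne.symm hbb)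
      have hst1 : stepTgt Γ x = stepSrc Γ y := by
        simp only [stepSrc, stepTgt, hb', ← hxy]
        cases x.2 <;> rfl
      have hst2 : stepSrc Γ x = stepTgt Γ y := by
        simp only [stepSrc, stepTgt, hb', ← hxy]
        cases x.2 <;> rfl
      -- first, b must be empty
      have hb0 : b.length = 0 := by
        have := hinj2 a.length (a.length + b.length) (by omega) (by omega)
          (by rw [hVi1, show a.length + b.length + 1 = a.length + 1 + b.length from by omega,
                hVj, hst1])
        omega
      have hbnil : b = [] := List.length_eq_zero_iff.mp hb0
      subst hbnil
      simp only [List.length_nil, add_zero] at hVj1 hn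
      have hVj1' : endOf Γ v (l.take (a.length + 2)) = stepTgt Γ y := by
        rw [show a.length + 2 = a.length + 1 + 1 from by omega]
        exact hVj1
      rcases Nat.eq_zero_or_pos a.length with ha0 | ha0
      · rcases Nat.lt_or_ge (a.length + 2) n with hlt | hge
        · have := hinj1 a.length (a.length + 2) (by omega) hlt
            (by rw [hVi, hVj1', hst2])
          omega
        · -- n = 2 : explicit backtrack
          have hc0 : c.length = 0 := by omega
          have hcnil : c = [] := List.length_eq_zero_iff.mp hc0
          have hanil : a = [] := List.length_eq_zero_iff.mp ha0
          subst hcnil; subst hanil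
          simp at heq
          have hy' : y = (x.1, !x.2) := Prod.ext hxy.symm hb'
          rw [heq, hy']
          obtain ⟨e, bx⟩ := x
          cases bx <;> simp [wvolt]
      · have := hinj2 (a.length - 1) (a.length + 1) (by omega) (by omega)
          (by rw [show a.length - 1 + 1 = a.length from by omega,
                show a.length + 1 + 1 = a.length + 2 from by omega, hVi, hVj1', hst2])
        omega

theorem lift_chain (S : Set Δ.E) (γ : Δ.E → G) :
    ∀ (l : List (Δ.E × Bool)) (v : Δ.V) (hv : v ∈ endpoints Δ S),
      (∀ s ∈ l, s.1 ∈ S) → chain Δ v l →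
      ∃ l' : List ((edgeInduced Δ S).toMGraph.E × Bool),
        chain (edgeInduced Δ S).toMGraph ⟨v, hv⟩ l' ∧
        (endOf (edgeInduced Δ S).toMGraph ⟨v, hv⟩ l').1 = endOf Δ v l ∧
        wvolt (Δ := (edgeInduced Δ S).toMGraph) (fun e => γ e.1) l' = wvolt γ l := by
  intro l
  induction l with
  | nil => exact fun v hv _ _ => ⟨[], trivial, rfl, rfl⟩
  | cons s rest ih =>
    intro v hv hmem hch
    have hsS : s.1 ∈ S := hmem s (List.mem_cons_self)
    have htgt : stepTgt Δ s ∈ endpoints Δ S := by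
      obtain ⟨e, b⟩ := s
      cases b
      · exact ⟨e, hsS, Or.inl rfl⟩
      · exact ⟨e, hsS, Or.inr rfl⟩
    obtain ⟨l', hc', he', hw'⟩ :=
      ih (stepTgt Δ s) htgt (fun t ht => hmem t (List.mem_cons_of_mem _ ht)) hch.2
    refine ⟨((⟨s.1, hsS⟩ : ↥S), s.2) :: l', ⟨?_, ?_⟩, ?_, ?_⟩
    · apply Subtype.ext
      have : (stepSrc (edgeInduced Δ S).toMGraph ((⟨s.1, hsS⟩ : ↥S), s.2)).1
          = stepSrc Δ s := by
        obtain ⟨e, b⟩ := s; cases b <;> rfl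
      rw [this, hch.1]
    · have hstep : stepTgt (edgeInduced Δ S).toMGraph ((⟨s.1, hsS⟩ : ↥S), s.2)
          = ⟨stepTgt Δ s, htgt⟩ := by
        apply Subtype.ext
        obtain ⟨e, b⟩ := s; cases b <;> rfl
      show chain (edgeInduced Δ S).toMGraph
        (stepTgt (edgeInduced Δ S).toMGraph ((⟨s.1, hsS⟩ : ↥S), s.2)) l'
      rw [hstep]
      exact hc'
    · have hstep : stepTgt (edgeInduced Δ S).toMGraph ((⟨s.1, hsS⟩ : ↥S), s.2)
          = ⟨stepTgt Δ s, htgt⟩ := by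
        apply Subtype.ext
        obtain ⟨e, b⟩ := s; cases b <;> rfl
      show (endOf (edgeInduced Δ S).toMGraph
        (stepTgt (edgeInduced Δ S).toMGraph ((⟨s.1, hsS⟩ : ↥S), s.2)) l').1 = _
      rw [hstep]
      exact he'
    · rw [wvolt_cons, wvolt_cons, hw']

/-- A closed walk within a spanning tree set has trivial voltage. -/
theorem stree_closed_wvolt {S : Set Δ.E} (hS : IsSpanningTreeSet Δ S) (γ : Δ.E → G)
    (l : List (Δ.E × Bool)) (v : Δ.V) (hmem : ∀ s ∈ l, s.1 ∈ S) (hch : chain Δ v l)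
    (hcyc : endOf Δ v l = v) : wvolt γ l = 1 := by
  have hv : v ∈ endpoints Δ S := hS.2.2 v
  obtain ⟨l', hc', he', hw'⟩ := lift_chain S γ l v hv hmem hch
  rw [← hw']
  exact acyclic_closed_wvolt hS.1 _ l'.length l' ⟨v, hv⟩ rfl hc'
    (Subtype.ext (he'.trans hcyc))

/-- Between any two vertices there is a walk through the spanning tree set. -/
theorem exists_treewalk {S : Set Δ.E} (hS : IsSpanningTreeSet Δ S) (u v : Δ.V) :
    ∃ l : List (Δ.E × Bool), chain Δ u l ∧ endOf Δ u l = v ∧ ∀ s ∈ l, s.1 ∈ S := by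
  obtain ⟨w, hw1, hw2⟩ := hS.2.1 ⟨u, hS.2.2 u⟩ ⟨v, hS.2.2 v⟩
  refine ⟨(w.map (Subgraph.incl _)).steps, ?_, ?_, ?_⟩
  · have hok := (w.map (Subgraph.incl (edgeInduced Δ S))).ok
    have hfirst : (w.map (Subgraph.incl (edgeInduced Δ S))).first = u := by
      rw [show (w.map (Subgraph.incl (edgeInduced Δ S))).first = (w.first).1 from rfl, hw1]
    rwa [hfirst] at hok
  · have h := endOf_map (Subgraph.incl (edgeInduced Δ S)) w.steps w.first
    rw [show endOf (edgeInduced Δ S).toMGraph w.first w.steps = w.last from rfl,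
      hw1, hw2] at h
    exact h
  · intro s hs
    obtain ⟨t, _, rfl⟩ := List.exists_of_mem_map hs
    exact t.1.2

section Derived

variable {K : Type} [Group K]

theorem derived_step_reach (c : Δ.E → K) (s : Δ.E × Bool) (k : K) :
    Reachable (derivedGraph Δ c) (stepSrc Δ s, k)
      (stepTgt Δ s, k * cond s.2 (c s.1) (c s.1)⁻¹) := by
  obtain ⟨e, b⟩ := s
  cases b
  · refine ⟨⟨(Δ.τ e, k), [((e, k * (c e)⁻¹), false)],
      ⟨by show (Δ.τ e, k * (c e)⁻¹ * c e) = (Δ.τ e, k); rw [inv_mul_cancel_right],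
        trivial⟩⟩, rfl, ?_⟩
    rfl
  · exact ⟨⟨(Δ.ι e, k), [((e, k), true)], ⟨rfl, trivial⟩⟩, rfl, rfl⟩

theorem derived_reach (c : Δ.E → K) :
    ∀ (l : List (Δ.E × Bool)) (v : Δ.V), chain Δ v l → ∀ k : K,
      Reachable (derivedGraph Δ c) (v, k) (endOf Δ v l, k * wvolt c l) := by
  intro l
  induction l with
  | nil =>
    intro v _ k
    rw [show wvolt c ([] : List (Δ.E × Bool)) = 1 from rfl, mul_one]
    exact Reachable.refl' _ _
  | cons s rest ih =>
    intro v hch k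
    have h1 := derived_step_reach c s k
    rw [hch.1] at h1
    have h2 := ih (stepTgt Δ s) hch.2 (k * cond s.2 (c s.1) (c s.1)⁻¹)
    rw [wvolt_cons, ← mul_assoc]
    exact h1.trans h2

theorem derived_ratio (c : Δ.E → K) :
    ∀ (l : List ((derivedGraph Δ c).E × Bool)) (p : (derivedGraph Δ c).V),
      chain (derivedGraph Δ c) p l →
      p.2⁻¹ * (endOf (derivedGraph Δ c) p l).2 ∈ Subgroup.closure (Set.range c) := by
  intro l
  induction l with
  | nil =>
    intro p _
    rw [show (endOf (derivedGraph Δ c) p [] : (derivedGraph Δ c).V) = p from rfl,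
      inv_mul_cancel]
    exact one_mem _
  | cons s rest ih =>
    intro p hch
    have hmid := ih (stepTgt _ s) hch.2
    have hstep : p.2⁻¹ * (stepTgt (derivedGraph Δ c) s).2 ∈ Subgroup.closure (Set.range c) := by
      rw [← hch.1]
      obtain ⟨⟨e, k⟩, b⟩ := s
      cases b
      · show (k * c e)⁻¹ * k ∈ _
        have h : (k * c e)⁻¹ * k = (c e)⁻¹ := by group
        rw [h]
        exact inv_mem (Subgroup.subset_closure ⟨e, rfl⟩)
      · show k⁻¹ * (k * c e) ∈ _
        rw [inv_mul_cancel_left]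
        exact Subgroup.subset_closure ⟨e, rfl⟩
    have hcomb := mul_mem hstep hmid
    rw [show p.2⁻¹ * (stepTgt (derivedGraph Δ c) s).2 *
          ((stepTgt (derivedGraph Δ c) s).2⁻¹ *
            (endOf (derivedGraph Δ c) (stepTgt (derivedGraph Δ c) s) rest).2)
        = p.2⁻¹ * (endOf (derivedGraph Δ c) (stepTgt (derivedGraph Δ c) s) rest).2 from by
      group] at hcomb
    exact hcomb

theorem reach_ratio (c : Δ.E → K) {p q : (derivedGraph Δ c).V}
    (h : Reachable (derivedGraph Δ c) p q) :
    p.2⁻¹ * q.2 ∈ Subgroup.closure (Set.range c) := by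
  obtain ⟨w, h1, h2⟩ := h
  rw [← h1, ← h2]
  exact derived_ratio c w.steps w.first w.ok

end Derived

theorem derived_full_reach (c : Δ.E → G) {S : Set Δ.E} (hS : IsSpanningTreeSet Δ S)
    (hc1 : ∀ e ∈ S, c e = 1) :
    ∀ h : G, h ∈ Subgroup.closure (Set.range c) →
      ∀ (u w : Δ.V) (k : G), Reachable (derivedGraph Δ c) (u, k) (w, k * h) := by
  have treewalk : ∀ (u w : Δ.V) (k : G), Reachable (derivedGraph Δ c) (u, k) (w, k) := by
    intro u w k
    obtain ⟨l, hch, he, hm⟩ := exists_treewalk hS u w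
    have hone : wvolt c l = 1 := wvolt_ones c l fun s hs => hc1 s.1 (hm s hs)
    have hr := derived_reach c l u hch k
    rwa [hone, mul_one, he] at hr
  intro h hh
  refine Subgroup.closure_induction
    (p := fun x _ => ∀ (u w : Δ.V) (k : G), Reachable (derivedGraph Δ c) (u, k) (w, k * x))
    ?_ ?_ ?_ ?_ hh
  · rintro x ⟨e, rfl⟩ u w k
    have h1 := treewalk u (Δ.ι e) k
    have h2 := derived_reach c [(e, true)] (Δ.ι e) ⟨rfl, trivial⟩ k
    rw [show wvolt c [(e, true)] = c e by simp [wvolt]] at h2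
    exact (h1.trans h2).trans (treewalk (Δ.τ e) w (k * c e))
  · intro u w k
    rw [mul_one]
    exact treewalk u w k
  · intro p q _ _ hp hq u w k
    rw [← mul_assoc]
    exact (hp u u k).trans (hq u w (k * p))
  · intro p _ hp u w k
    have hr := hp w u (k * p⁻¹)
    rw [inv_mul_cancel_right] at hr
    exact hr.symm'

/-- A component of a derived graph whose voltage is trivial on a spanning tree set is
isomorphic to the derived graph over the subgroup generated by the voltages. -/
noncomputable def componentDerivedIso (c : Δ.E → G) {S : Set Δ.E}
    (hS : IsSpanningTreeSet Δ S) (hc1 : ∀ e ∈ S, c e = 1) (y : (derivedGraph Δ c).V) :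
    Iso (componentOf (derivedGraph Δ c) y).toMGraph
      (derivedGraph Δ (restrictToClosure c)) where
  onV :=
    { toFun := fun p => (p.1.1, ⟨y.2⁻¹ * p.1.2, reach_ratio c p.2⟩)
      invFun := fun q => ⟨(q.1, y.2 * q.2.1),
        derived_full_reach c hS hc1 q.2.1 q.2.2 y.1 q.1 y.2⟩
      left_inv := fun p => Subtype.ext (by
        show ((p.1).1, y.2 * (y.2⁻¹ * (p.1).2)) = p.1
        rw [mul_inv_cancel_left]
        rfl)
      right_inv := fun q => Prod.ext rfl (Subtype.ext (inv_mul_cancel_left _ _)) }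
  onE :=
    { toFun := fun p => (p.1.1, ⟨y.2⁻¹ * p.1.2, reach_ratio c p.2⟩)
      invFun := fun q => ⟨(q.1, y.2 * q.2.1),
        derived_full_reach c hS hc1 q.2.1 q.2.2 y.1 (Δ.ι q.1) y.2⟩
      left_inv := fun p => Subtype.ext (by
        show ((p.1).1, y.2 * (y.2⁻¹ * (p.1).2)) = p.1
        rw [mul_inv_cancel_left]
        rfl)
      right_inv := fun q => Prod.ext rfl (Subtype.ext (inv_mul_cancel_left _ _)) }
  map_ι e := rfl
  map_τ e := Prod.ext rfl (Subtype.ext (mul_assoc _ _ _))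

/-- From a condensation one obtains a gauge function relating `γS` to `γ`. -/
theorem exists_gauge {S : Set Δ.E} (hS : IsSpanningTreeSet Δ S) (γ γS : Δ.E → G)
    (v₀ : Δ.V) (hcond : IsCondensation γ S v₀ γS) :
    ∃ f : Δ.V → G, ∀ e : Δ.E, γS e = f (Δ.ι e) * γ e * (f (Δ.τ e))⁻¹ := by
  classical
  choose L hLc hLe hLm using fun w => exists_treewalk hS v₀ w
  refine ⟨fun w => wvolt γ (L w), ?_⟩
  have huniq : ∀ (l : List (Δ.E × Bool)) (u : Δ.V), chain Δ u l → (∀ s ∈ l, s.1 ∈ S) →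
      wvolt γ l = (wvolt γ (L u))⁻¹ * wvolt γ (L (endOf Δ u l)) := by
    intro l u hch hmem
    have hrev := chain_reverse Δ (L (endOf Δ u l)) v₀ (hLc _)
    rw [hLe (endOf Δ u l)] at hrev
    have hch2 : chain Δ u (l ++ (L (endOf Δ u l)).reverse.map flipStep) :=
      chain_append Δ _ _ _ hch hrev
    have hbig : chain Δ v₀ (L u ++ (l ++ (L (endOf Δ u l)).reverse.map flipStep)) :=
      chain_append Δ _ _ _ (hLc u) (by rw [hLe u]; exact hch2)
    have hend : endOf Δ v₀ (L u ++ (l ++ (L (endOf Δ u l)).reverse.map flipStep)) = v₀ := by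
      rw [endOf_append, hLe u, endOf_append]
      have h := endOf_reverse Δ (L (endOf Δ u l)) v₀ (hLc _)
      rw [hLe (endOf Δ u l)] at h
      exact h
    have hmm : ∀ s ∈ L u ++ (l ++ (L (endOf Δ u l)).reverse.map flipStep), s.1 ∈ S := by
      intro s hs
      rcases List.mem_append.mp hs with h | h
      · exact hLm u s h
      rcases List.mem_append.mp h with h | h
      · exact hmem s h
      · obtain ⟨t, ht, rfl⟩ := List.exists_of_mem_map h
        exact hLm _ t (List.mem_reverse.mp ht)
    have hz := stree_closed_wvolt hS γ _ v₀ hmm hbig hend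
    rw [wvolt_append, wvolt_append, wvolt_reverse] at hz
    rw [← mul_assoc, mul_inv_eq_one] at hz
    rw [← hz]
    group
  have hfv₀ : wvolt γ (L v₀) = 1 :=
    stree_closed_wvolt hS γ _ v₀ (hLm v₀) (hLc v₀) (hLe v₀)
  intro e
  by_cases heS : e ∈ S
  · rw [hcond.1 e heS]
    have h1 := huniq [(e, true)] (Δ.ι e) ⟨rfl, trivial⟩ (by
      intro s hs
      rw [List.mem_singleton] at hs
      rw [hs]
      exact heS)
    rw [show wvolt γ [(e, true)] = γ e by simp [wvolt],
      show endOf Δ (Δ.ι e) [(e, true)] = Δ.τ e from rfl] at h1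
    rw [h1]
    group
  · obtain ⟨p₁, p₂, hp1f, hp1l, hp2f, hp2l, _, _, hm1, hm2, heq⟩ := hcond.2 e heS
    have hv1 := huniq p₁.steps p₁.first p₁.ok hm1
    rw [show endOf Δ p₁.first p₁.steps = Δ.ι e from hp1l, hp1f, hfv₀, inv_one, one_mul] at hv1
    have hv2 := huniq p₂.steps p₂.first p₂.ok hm2
    rw [show endOf Δ p₂.first p₂.steps = v₀ from hp2l, hp2f, hfv₀, mul_one] at hv2
    rw [heq, voltage_eq_wvolt, voltage_eq_wvolt, hv1, hv2]

end Stmt10Aux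

/-- Let `(Δ, γ)` be a connected voltage graph whose voltages generate
the group `G`.  For any connected component `Γ₀` of `Δ ×_γ G`, any spanning tree set
`S` of `Δ` and any base vertex `v₀`, the condensation `γ_S` of `γ` satisfies
`Γ₀ ≅ Δ ×_{γ_S} ⟨γ_S(E_Δ)⟩`. -/
theorem component_iso_condensed_derived {Δ : MGraph} {G : Type} [Group G]
    (γ : Δ.E → G) (hΔ : Connected Δ)
    (hgen : Subgroup.closure (Set.range γ) = ⊤)
    (x : (derivedGraph Δ γ).V)
    (S : Set Δ.E) (hS : IsSpanningTreeSet Δ S) (v₀ : Δ.V)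
    (γS : Δ.E → G) (hcond : IsCondensation γ S v₀ γS) :
    Nonempty (Iso (componentOf (derivedGraph Δ γ) x).toMGraph
      (derivedGraph Δ (restrictToClosure γS))) := by
  obtain ⟨f, hkey⟩ := exists_gauge hS γ γS v₀ hcond
  let Φ : Iso (derivedGraph Δ γ) (derivedGraph Δ γS) :=
    { onV :=
        { toFun := fun p => (p.1, p.2 * (f p.1)⁻¹)
          invFun := fun p => (p.1, p.2 * f p.1)
          left_inv := fun p => by
            show (p.1, p.2 * (f p.1)⁻¹ * f p.1) = p
            rw [inv_mul_cancel_right]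
            rfl
          right_inv := fun p => by
            show (p.1, p.2 * f p.1 * (f p.1)⁻¹) = p
            rw [mul_inv_cancel_right]
            rfl }
      onE :=
        { toFun := fun p => (p.1, p.2 * (f (Δ.ι p.1))⁻¹)
          invFun := fun p => (p.1, p.2 * f (Δ.ι p.1))
          left_inv := fun p => by
            show (p.1, p.2 * (f (Δ.ι p.1))⁻¹ * f (Δ.ι p.1)) = p
            rw [inv_mul_cancel_right]
            rfl
          right_inv := fun p => by
            show (p.1, p.2 * f (Δ.ι p.1) * (f (Δ.ι p.1))⁻¹) = p
            rw [mul_inv_cancel_right]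
            rfl }
      map_ι := fun e => rfl
      map_τ := fun e => by
        refine Prod.ext rfl ?_
        show e.2 * (f (Δ.ι e.1))⁻¹ * γS e.1 = e.2 * γ e.1 * (f (Δ.τ e.1))⁻¹
        rw [hkey e.1]
        group }
  exact ⟨(isoComponent Φ x).trans' (componentDerivedIso γS hS hcond.1 (Φ.onV x))⟩

end VG
end
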